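/- arXiv:2504.07186 — 3 statements merged into one kernel-verified Lean document; each statement's English description precedes it below -/
import Mathlib

section
/- If G is a maximal outerplanar graph of order n ≥ 4 and k is the number of vertices of G having degree 2, then γ₂ᵈ(G) ≤ γ(G) ≤ ⌊(n+k)/4⌋. -/
open SimpleGraph

/-- `G` is (the representation of) a maximal outerplanar graph on the convex polygon
`0, 1, …, n-1`: it contains all outer edges `{i, (i+1) mod n}`, no two of its edges
cross, and it has exactly `2n - 3` edges. -/
def IsMop {n : ℕ} [NeZero n] (G : SimpleGraph (Fin n)) : Prop :=
  (∀ i : Fin n, G.Adj i (i + 1)) ∧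
  (∀ a b c d : Fin n, a < b → b < c → c < d → G.Adj a c → ¬ G.Adj b d) ∧
  G.edgeSet.ncard = 2 * n - 3

/-- An edge of `G` that is not an outer edge of the polygon. -/
def IsDiagonal {n : ℕ} [NeZero n] (G : SimpleGraph (Fin n)) (u v : Fin n) : Prop :=
  G.Adj u v ∧ v ≠ u + 1 ∧ u ≠ v + 1

/-- Three pairwise adjacent vertices all of whose connecting edges are diagonals. -/
def IsInternalTriangle {n : ℕ} [NeZero n] (G : SimpleGraph (Fin n)) (a b c : Fin n) : Prop :=
  IsDiagonal G a b ∧ IsDiagonal G b c ∧ IsDiagonal G a c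

/-- The number of vertices of `G` having degree `2`. -/
noncomputable def degTwoCount {n : ℕ} (G : SimpleGraph (Fin n)) : ℕ :=
  {v : Fin n | (G.neighborSet v).ncard = 2}.ncard

/-- `D` is a dominating set of `G`. -/
def IsDomSet {V : Type*} (G : SimpleGraph V) (D : Set V) : Prop :=
  ∀ v ∉ D, ∃ u ∈ D, G.Adj u v

/-- `D` is a disjunctive dominating set (2DD-set) of `G`: every vertex outside `D`
has a neighbor in `D` or at least two vertices of `D` at distance exactly `2`. -/
def IsDisjDomSet {V : Type*} (G : SimpleGraph V) (D : Set V) : Prop :=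
  ∀ v ∉ D, (∃ u ∈ D, G.Adj u v) ∨
    ∃ u ∈ D, ∃ w ∈ D, u ≠ w ∧ G.dist u v = 2 ∧ G.dist w v = 2

/-- The domination number `γ(G)`. -/
noncomputable def domNum {V : Type*} [Fintype V] (G : SimpleGraph V) : ℕ :=
  sInf {k : ℕ | ∃ D : Set V, IsDomSet G D ∧ D.ncard = k}

/-- The disjunctive domination number `γ₂ᵈ(G)`. -/
noncomputable def disjDomNum {V : Type*} [Fintype V] (G : SimpleGraph V) : ℕ :=
  sInf {k : ℕ | ∃ D : Set V, IsDisjDomSet G D ∧ D.ncard = k}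

open Finset
open scoped Classical

namespace MopProof

variable {n : ℕ} (G : SimpleGraph (Fin n))

/-- adjacency on naturals -/
def adjN (i j : ℕ) : Prop := ∃ (hi : i < n) (hj : j < n), G.Adj ⟨i, hi⟩ ⟨j, hj⟩

variable {G}

lemma adjN_symm {i j : ℕ} (h : adjN G i j) : adjN G j i := by
  obtain ⟨hi, hj, h⟩ := h; exact ⟨hj, hi, h.symm⟩

lemma adjN_ne {i j : ℕ} (h : adjN G i j) : i ≠ j := by
  obtain ⟨hi, hj, h⟩ := h
  intro rfl; exact G.irrefl (by convert h)

lemma adjN_lt_left {i j : ℕ} (h : adjN G i j) : i < n := h.1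
lemma adjN_lt_right {i j : ℕ} (h : adjN G i j) : j < n := h.2.1

lemma adjN_of_adj {u v : Fin n} (h : G.Adj u v) : adjN G u.1 v.1 :=
  ⟨u.2, v.2, by simpa using h⟩

variable (G)

noncomputable def chordsF (a b : ℕ) : Finset (ℕ × ℕ) :=
  ((range n) ×ˢ (range n)).filter
    (fun p => a ≤ p.1 ∧ p.1 + 2 ≤ p.2 ∧ p.2 ≤ b ∧ adjN G p.1 p.2)

variable {G}

lemma mem_chordsF {a b x y : ℕ} :
    (x, y) ∈ chordsF G a b ↔ a ≤ x ∧ x + 2 ≤ y ∧ y ≤ b ∧ adjN G x y := by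
  unfold chordsF
  simp only [mem_filter, mem_product, mem_range]
  constructor
  · rintro ⟨-, h⟩; exact h
  · rintro ⟨h1, h2, h3, h4⟩
    exact ⟨⟨adjN_lt_left h4, adjN_lt_right h4⟩, h1, h2, h3, h4⟩

lemma chordsF_empty {a b : ℕ} (h : b < a + 2) : chordsF G a b = ∅ := by
  ext ⟨x, y⟩
  simp only [mem_chordsF, Finset.notMem_empty, iff_false]
  rintro ⟨h1, h2, h3, -⟩; omega

lemma chordsF_mono {a b a' b' : ℕ} (ha : a' ≤ a) (hb : b ≤ b') :
    chordsF G a b ⊆ chordsF G a' b' := by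
  rintro ⟨x, y⟩ h
  rw [mem_chordsF] at h ⊢
  exact ⟨by omega, h.2.1, by omega, h.2.2.2⟩


section withMop
variable [NeZero n] (hG : IsMop G) (hn : 4 ≤ n)
include hG

/-- all short sides -/
lemma side {i : ℕ} (h : i + 1 < n) : adjN G i (i+1) := by
  have h0 : i < n := Nat.lt_of_succ_lt h
  have := hG.1 ⟨i, h0⟩
  refine ⟨h0, h, ?_⟩
  convert this using 1
  apply Fin.ext
  rw [Fin.add_def]
  simp only [Fin.val_one']
  show i + 1 = (i + 1 % n) % n
  rw [Nat.mod_eq_of_lt (show 1 < n by omega), Nat.mod_eq_of_lt h]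

/-- the wrap side -/
lemma wrapSide (hn2 : 2 ≤ n) : adjN G 0 (n-1) := by
  have h0 : n - 1 < n := by omega
  have := hG.1 ⟨n-1, h0⟩
  apply adjN_symm
  refine ⟨h0, by omega, ?_⟩
  convert this using 1
  apply Fin.ext
  rw [Fin.add_def]
  simp only [Fin.val_one']
  show 0 = (n - 1 + 1 % n) % n
  rw [Nat.mod_eq_of_lt (show 1 < n by omega), Nat.sub_add_cancel (by omega), Nat.mod_self]

/-- crossing axiom in ℕ form -/
lemma cross {a b c d : ℕ} (hab : a < b) (hbc : b < c) (hcd : c < d) (hd : d < n)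
    (h1 : adjN G a c) (h2 : adjN G b d) : False := by
  obtain ⟨ha', hc', h1⟩ := h1
  obtain ⟨hb', hd', h2⟩ := h2
  exact hG.2.1 ⟨a, ha'⟩ ⟨b, hb'⟩ ⟨c, hc'⟩ ⟨d, hd'⟩ hab hbc hcd h1 h2

/-- neighbors of an interior vertex of an edge-interval are confined -/
lemma confined {a b v u : ℕ} (hab : adjN G a b) (hav : a < v) (hvb : v < b)
    (hvu : adjN G v u) : a ≤ u ∧ u ≤ b := by
  constructor
  · by_contra h
    push_neg at h
    exact cross hG h hav hvb (adjN_lt_right hab) (adjN_symm hvu) hab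
  · by_contra h
    push_neg at h
    exact cross hG hav hvb h (adjN_lt_right hvu) hab hvu

/-- split identity of the chord count at the maximal neighbour of `a` -/
lemma chords_split {a b : ℕ} (hab : a + 2 ≤ b) (hb : b < n) :
    ∃ z, a < z ∧ z < b ∧ adjN G a z ∧ (∀ u, z < u → u < b → ¬ adjN G a u) ∧
      (chordsF G a b).card =
        (chordsF G a z).card + (chordsF G z b).card + (if adjN G a b then 1 else 0) := by
  classical
  set C : Finset ℕ := (range b).filter (fun c => a < c ∧ adjN G a c) with hC
  have hmemC : ∀ c, c ∈ C ↔ c < b ∧ a < c ∧ adjN G a c := by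
    intro c; simp [hC]
  have hne : C.Nonempty := by
    refine ⟨a + 1, ?_⟩
    rw [hmemC]
    exact ⟨by omega, by omega, side hG (by omega)⟩
  set z := C.max' hne with hz
  have hzC : z ∈ C := C.max'_mem hne
  rw [hmemC] at hzC
  obtain ⟨hzb, haz, hadj⟩ := hzC
  have hmax : ∀ u, z < u → u < b → ¬ adjN G a u := by
    intro u hzu hub hadj'
    have : u ∈ C := by rw [hmemC]; exact ⟨hub, by omega, hadj'⟩
    exact absurd (C.le_max' u this) (by omega)
  refine ⟨z, haz, hzb, hadj, hmax, ?_⟩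
  have hsetT : chordsF G a b = (chordsF G a z ∪ chordsF G z b) ∪
      (if adjN G a b then ({(a,b)} : Finset (ℕ × ℕ)) else ∅) := by
    ext ⟨x, y⟩
    simp only [Finset.mem_union, mem_chordsF]
    constructor
    · rintro ⟨h1, h2, h3, h4⟩
      by_cases hyz : y ≤ z
      · exact Or.inl (Or.inl ⟨h1, h2, hyz, h4⟩)
      · push_neg at hyz
        rcases eq_or_lt_of_le h1 with rfl | hax
        · -- x = a
          rcases eq_or_lt_of_le h3 with rfl | hyb
          · rw [if_pos h4]; exact Or.inr (by simp)
          · exact absurd h4 (hmax y hyz hyb)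
        · -- x > a ; then x ≥ z, else crossing
          have hxz : z ≤ x := by
            by_contra hcon
            push_neg at hcon
            exact cross hG hax hcon hyz (adjN_lt_right h4) hadj h4
          exact Or.inl (Or.inr ⟨hxz, h2, h3, h4⟩)
    · intro h
      rcases h with (⟨h1,h2,h3,h4⟩ | ⟨h1,h2,h3,h4⟩) | h
      · exact ⟨h1, h2, by omega, h4⟩
      · exact ⟨by omega, h2, h3, h4⟩
      · by_cases hab' : adjN G a b
        · rw [if_pos hab'] at h
          simp only [Finset.mem_singleton, Prod.mk.injEq] at h
          obtain ⟨rfl, rfl⟩ := h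
          exact ⟨le_refl _, hab, le_refl _, hab'⟩
        · rw [if_neg hab'] at h; exact absurd h (Finset.notMem_empty _)
  have hd1 : Disjoint (chordsF G a z) (chordsF G z b) := by
    rw [Finset.disjoint_left]
    rintro ⟨x, y⟩ h1 h2
    rw [mem_chordsF] at h1 h2
    omega
  have hd2 : Disjoint (chordsF G a z ∪ chordsF G z b)
      (if adjN G a b then ({(a,b)} : Finset (ℕ × ℕ)) else ∅) := by
    rw [Finset.disjoint_right]
    intro p hp hp'
    by_cases hab' : adjN G a b
    · rw [if_pos hab'] at hp
      simp only [Finset.mem_singleton] at hp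
      subst hp
      rcases Finset.mem_union.1 hp' with h | h <;> rw [mem_chordsF] at h <;> omega
    · rw [if_neg hab'] at hp; exact absurd hp (Finset.notMem_empty _)
  rw [hsetT, Finset.card_union_of_disjoint hd2, Finset.card_union_of_disjoint hd1]
  congr 1
  by_cases hab' : adjN G a b <;> simp [hab']

/-- upper bound for the chord count -/
lemma chords_le : ∀ d a b, b - a ≤ d → b < n → (chordsF G a b).card ≤ b - a - 1 := by
  intro d
  induction d using Nat.strong_induction_on with
  | _ d ih =>
    intro a b hd hb
    by_cases h2 : b < a + 2
    · rw [chordsF_empty h2]; simp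
    · push_neg at h2
      obtain ⟨z, haz, hzb, -, -, hcard⟩ := chords_split hG h2 hb
      have h1 : (chordsF G a z).card ≤ z - a - 1 :=
        ih (z - a) (by omega) a z (le_refl _) (by omega)
      have h2' : (chordsF G z b).card ≤ b - z - 1 :=
        ih (b - z) (by omega) z b (le_refl _) hb
      have : (if adjN G a b then 1 else 0) ≤ 1 := by split <;> omega
      omega

def Tight (G : SimpleGraph (Fin n)) (a b : ℕ) : Prop := (chordsF G a b).card = b - a - 1

lemma tight_adj {a b : ℕ} (ht : Tight G a b) (hab : a < b) (hb : b < n) : adjN G a b := by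
  rcases eq_or_lt_of_le (Nat.succ_le_of_lt hab) with h1 | h2
  · have : b = a + 1 := by omega
    subst this
    exact side hG hb
  · have h2' : a + 2 ≤ b := by omega
    obtain ⟨z, haz, hzb, -, -, hcard⟩ := chords_split hG h2' hb
    by_contra hcon
    rw [if_neg hcon] at hcard
    have h1 : (chordsF G a z).card ≤ z - a - 1 := chords_le hG (z-a) a z (le_refl _) (by omega)
    have h2'' : (chordsF G z b).card ≤ b - z - 1 := chords_le hG (b-z) z b (le_refl _) hb
    unfold Tight at ht
    omega

lemma tight_split {a b : ℕ} (ht : Tight G a b) (hab : a + 2 ≤ b) (hb : b < n) :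
    ∃ z, a < z ∧ z < b ∧ adjN G a z ∧ adjN G z b ∧
      (∀ u, z < u → u < b → ¬ adjN G a u) ∧ Tight G a z ∧ Tight G z b := by
  obtain ⟨z, haz, hzb, hadj, hmax, hcard⟩ := chords_split hG hab hb
  rw [if_pos (tight_adj hG ht (by omega) hb)] at hcard
  have h1 : (chordsF G a z).card ≤ z - a - 1 := chords_le hG (z-a) a z (le_refl _) (by omega)
  have h2 : (chordsF G z b).card ≤ b - z - 1 := chords_le hG (b-z) z b (le_refl _) hb
  unfold Tight at ht
  have ht1 : Tight G a z := by unfold Tight; omega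
  have ht2 : Tight G z b := by unfold Tight; omega
  exact ⟨z, haz, hzb, hadj, tight_adj hG ht2 (by omega) hb, hmax, ht1, ht2⟩

/-- unordered edge to ordered pair of values -/
def pairOf : Sym2 (Fin n) → ℕ × ℕ :=
  Sym2.lift ⟨fun x y => (min x.1 y.1, max x.1 y.1), by
    intro x y; simp [min_comm, max_comm]⟩

omit [NeZero n] hG in
lemma pairOf_injective : Function.Injective (pairOf (n := n)) := by
  intro e1 e2 h
  induction e1 using Sym2.inductionOn with
  | hf a b =>
    induction e2 using Sym2.inductionOn with
    | hf c d =>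
      simp only [pairOf, Sym2.lift_mk, Prod.mk.injEq] at h
      rw [Sym2.eq_iff]
      have : (a.1 = c.1 ∧ b.1 = d.1) ∨ (a.1 = d.1 ∧ b.1 = c.1) := by omega
      rcases this with ⟨h1, h2⟩ | ⟨h1, h2⟩
      · exact Or.inl ⟨Fin.ext h1, Fin.ext h2⟩
      · exact Or.inr ⟨Fin.ext h1, Fin.ext h2⟩

def sidesF (n : ℕ) : Finset (ℕ × ℕ) := (range (n-1)).image (fun i => (i, i+1))

omit [NeZero n] hG in
lemma mem_sidesF {n' : ℕ} {x y : ℕ} : (x, y) ∈ sidesF n' ↔ x + 1 < n' ∧ y = x + 1 := by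
  unfold sidesF
  simp only [Finset.mem_image, mem_range, Prod.mk.injEq]
  constructor
  · rintro ⟨i, hi, rfl, rfl⟩; omega
  · rintro ⟨h1, rfl⟩; exact ⟨x, by omega, rfl, rfl⟩

lemma image_edges (hn : 4 ≤ n) :
    pairOf '' G.edgeSet = ↑(sidesF n ∪ chordsF G 0 (n-1)) := by
  ext ⟨x, y⟩
  simp only [Set.mem_image, Finset.coe_union, Set.mem_union, Finset.mem_coe,
    Finset.mem_union, mem_sidesF, mem_chordsF]
  constructor
  · rintro ⟨e, he, hpe⟩
    induction e using Sym2.inductionOn with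
    | hf u v =>
      rw [SimpleGraph.mem_edgeSet] at he
      simp only [pairOf, Sym2.lift_mk, Prod.mk.injEq] at hpe
      obtain ⟨h1, h2⟩ := hpe
      have huv : u.1 ≠ v.1 := fun hc => G.irrefl (by rwa [Fin.ext hc] at he)
      have hadj : adjN G x y := by
        rcases le_or_gt u.1 v.1 with hle | hlt
        · rw [min_eq_left hle] at h1; rw [max_eq_right hle] at h2
          subst h1; subst h2; exact ⟨u.2, v.2, by simpa using he⟩
        · rw [min_eq_right hlt.le] at h1; rw [max_eq_left hlt.le] at h2
          subst h1; subst h2; exact ⟨v.2, u.2, by simpa using he.symm⟩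
      have hxy : x < y := by
        have := huv; omega
      have hyn : y < n := adjN_lt_right hadj
      rcases Nat.lt_or_ge y (x+2) with h | h
      · exact Or.inl ⟨by omega, by omega⟩
      · right; exact ⟨by omega, h, by omega, hadj⟩
  · rintro (⟨h1, rfl⟩ | ⟨-, h2, h3, hadj⟩)
    · obtain ⟨hi, hj, he⟩ := side hG h1
      exact ⟨Sym2.mk (⟨x, hi⟩ : Fin n) ⟨x+1, hj⟩, he, by
        simp [pairOf]⟩
    · obtain ⟨hi, hj, he⟩ := hadj
      exact ⟨Sym2.mk (⟨x, hi⟩ : Fin n) ⟨y, hj⟩, he, by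
        simp only [pairOf, Sym2.lift_mk, Prod.mk.injEq]
        constructor
        · exact min_eq_left (by omega)
        · exact max_eq_right (by omega)⟩

lemma tight_top (hn : 4 ≤ n) : Tight G 0 (n-1) := by
  have h1 : (pairOf '' G.edgeSet).ncard = 2*n-3 := by
    rw [Set.ncard_image_of_injective _ pairOf_injective, hG.2.2]
  rw [image_edges hG hn] at h1
  rw [Set.ncard_coe_finset] at h1
  have hdisj : Disjoint (sidesF n) (chordsF G 0 (n-1)) := by
    rw [Finset.disjoint_left]
    rintro ⟨x, y⟩ hp hp'
    rw [mem_sidesF] at hp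
    rw [mem_chordsF] at hp'
    omega
  rw [Finset.card_union_of_disjoint hdisj] at h1
  have hcs : (sidesF n).card = n - 1 := by
    unfold sidesF
    rw [Finset.card_image_of_injective _ (fun i j h => by
      simpa using (Prod.mk.injEq _ _ _ _ ▸ h :
        (i = j ∧ i + 1 = j + 1)).1), Finset.card_range]
  unfold Tight
  omega

abbrev Col := Fin 4

variable (G) in
/-- colors visible from `v` inside the interval `[a,b]` -/
noncomputable def sees (a b : ℕ) (f : ℕ → Finset Col) (v : ℕ) : Finset Col :=
  Finset.biUnion ((range n).filter (fun u => a ≤ u ∧ u ≤ b ∧ (u = v ∨ adjN G v u))) f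

omit [NeZero n] hG in
lemma mem_sees {a b v : ℕ} {f : ℕ → Finset Col} {c : Col} :
    c ∈ sees G a b f v ↔ ∃ u, u < n ∧ a ≤ u ∧ u ≤ b ∧ (u = v ∨ adjN G v u) ∧ c ∈ f u := by
  unfold sees
  simp only [Finset.mem_biUnion, mem_filter, mem_range]
  constructor
  · rintro ⟨u, ⟨h1, h2, h3, h4⟩, h5⟩; exact ⟨u, h1, h2, h3, h4, h5⟩
  · rintro ⟨u, h1, h2, h3, h4, h5⟩; exact ⟨u, ⟨h1, h2, h3, h4⟩, h5⟩

omit [NeZero n] hG in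
lemma sees_mono_agree {a b a' b' v : ℕ} {f f' : ℕ → Finset Col}
    (ha : a' ≤ a) (hb : b ≤ b') (hf : ∀ u, a ≤ u → u ≤ b → f' u = f u) :
    sees G a b f v ⊆ sees G a' b' f' v := by
  intro c hc
  rw [mem_sees] at hc ⊢
  obtain ⟨u, h1, h2, h3, h4, h5⟩ := hc
  exact ⟨u, h1, by omega, by omega, h4, by rw [hf u h2 h3]; exact h5⟩

omit [NeZero n] hG in
lemma mem_sees_self {a b v : ℕ} {f : ℕ → Finset Col} {c : Col}
    (hv : v < n) (hav : a ≤ v) (hvb : v ≤ b) (hc : c ∈ f v) : c ∈ sees G a b f v :=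
  mem_sees.2 ⟨v, hv, hav, hvb, Or.inl rfl, hc⟩

omit [NeZero n] hG in
lemma mem_sees_adj {a b v u : ℕ} {f : ℕ → Finset Col} {c : Col}
    (h : adjN G v u) (hau : a ≤ u) (hub : u ≤ b) (hc : c ∈ f u) : c ∈ sees G a b f v :=
  mem_sees.2 ⟨u, adjN_lt_right h, hau, hub, Or.inr h, hc⟩

variable (G) in
/-- `v` is an ear of the interval `[a,b]` : all its neighbours inside are `v±1`. -/
def EarI (a b v : ℕ) : Prop := ∀ u, a ≤ u → u ≤ b → adjN G v u → u = v - 1 ∨ u = v + 1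

lemma earI_mono {a b a' b' v : ℕ} (hadj : adjN G a' b') (ha : a ≤ a') (hb : b' ≤ b)
    (hv : a' < v) (hv' : v < b') (h : EarI G a' b' v) : EarI G a b v := by
  intro u _ _ hu
  obtain ⟨h1, h2⟩ := confined hG hadj hv hv' hu
  exact h u h1 h2 hu

omit [NeZero n] hG in
lemma exists_col_notin (s : Finset Col) (h : s.card ≤ 3) : ∃ c, c ∉ s := by
  by_contra hc
  push_neg at hc
  have : (Finset.univ : Finset Col) ⊆ s := fun c _ => hc c
  have := Finset.card_le_card this
  simp at this
  omega

omit [NeZero n] hG in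
lemma exists_third (c1 c2 : Col) : ∃ c3, c3 ≠ c1 ∧ c3 ≠ c2 := by
  obtain ⟨c, hc⟩ := exists_col_notin {c1, c2} (by
    apply le_trans (Finset.card_insert_le _ _)
    simp)
  exact ⟨c, by simp at hc; exact hc.1, by simp at hc; exact hc.2⟩

omit [NeZero n] hG in
lemma cover_choice {S1 : Finset Col} {c1 c2 e : Col} (h12 : c1 ≠ c2) (he : e ∈ S1)
    (he1 : e ≠ c1) (he2 : e ≠ c2) :
    ∃ cz, cz ≠ c1 ∧ cz ≠ c2 ∧ Finset.univ \ S1 ⊆ {c1, c2, cz} := by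
  set U := Finset.univ \ (S1 ∪ {c1, c2}) with hU
  have hsub : U ⊆ Finset.univ \ {e, c1, c2} := by
    apply Finset.sdiff_subset_sdiff (le_refl _)
    intro c hc
    simp only [Finset.mem_insert, Finset.mem_singleton] at hc
    rcases hc with rfl | rfl | rfl
    · simp [Finset.mem_union, he]
    · simp
    · simp
  have hcard : U.card ≤ 1 := by
    have h3 : ({e, c1, c2} : Finset Col).card = 3 := by
      rw [Finset.card_insert_of_notMem (by simp [he1, he2]),
          Finset.card_insert_of_notMem (by simp [h12])]
      simp
    have h4 : (Finset.univ \ ({e, c1, c2} : Finset Col)).card = 1 := by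
      rw [Finset.card_sdiff_of_subset (Finset.subset_univ _), h3, Finset.card_univ]
      rfl
    exact le_trans (Finset.card_le_card hsub) (le_of_eq h4)
  by_cases hne : U.Nonempty
  · obtain ⟨cz, hcz⟩ := hne
    have hcz' := hcz
    rw [hU, Finset.mem_sdiff, Finset.mem_union] at hcz'
    push_neg at hcz'
    refine ⟨cz, ?_, ?_, ?_⟩
    · intro h; apply hcz'.2.2; simp [h]
    · intro h; apply hcz'.2.2; simp [h]
    · intro c hc
      rw [Finset.mem_sdiff] at hc
      by_cases hcc : c ∈ ({c1, c2} : Finset Col)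
      · simp only [Finset.mem_insert, Finset.mem_singleton] at hcc ⊢; tauto
      · have hcU : c ∈ U := by
          rw [hU, Finset.mem_sdiff, Finset.mem_union]
          push_neg
          exact ⟨Finset.mem_univ _, hc.2, hcc⟩
        have : c = cz := by
          have := Finset.card_le_one.1 hcard c hcU cz hcz
          exact this
        simp [this]
  · rw [Finset.not_nonempty_iff_eq_empty] at hne
    obtain ⟨cz, h1, h2⟩ := exists_third c1 c2
    refine ⟨cz, h1, h2, ?_⟩
    intro c hc
    rw [Finset.mem_sdiff] at hc
    by_cases hcc : c ∈ ({c1, c2} : Finset Col)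
    · simp only [Finset.mem_insert, Finset.mem_singleton] at hcc ⊢; tauto
    · exfalso
      have : c ∈ U := by
        rw [hU, Finset.mem_sdiff, Finset.mem_union]
        push_neg
        exact ⟨Finset.mem_univ _, hc.2, hcc⟩
      rw [hne] at this
      exact Finset.notMem_empty _ this

variable (G) in
def RainbowOK (a b : ℕ) (c1 c2 : Col) (S1 S2 : Finset Col) (f : ℕ → Finset Col) : Prop :=
  f a = {c1} ∧ f b = {c2} ∧
  (∀ v, v < a ∨ b < v → f v = ∅) ∧
  (∀ v, a < v → v < b → (f v).card ≤ 2 ∧ ((f v).card = 2 → EarI G a b v)) ∧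
  (∀ v, a < v → v < b → ∀ c : Col, c ∈ sees G a b f v) ∧
  (∀ c : Col, c ∉ S1 → c ∈ sees G a b f a) ∧
  (∀ c : Col, c ∉ S2 → c ∈ sees G a b f b)

lemma rainbow : ∀ d a b, b - a = d → 2 ≤ d → b < n → Tight G a b →
    ∀ (c1 c2 : Col) (S1 S2 : Finset Col), c1 ≠ c2 →
    ((∀ u, a ≤ u → u ≤ b → adjN G a u → u = a+1 ∨ u = b) → (S1 \ {c1, c2}).Nonempty) →
    ((∀ u, a ≤ u → u ≤ b → adjN G b u → u = b-1 ∨ u = a) → (S2 \ {c1, c2}).Nonempty) →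
    ∃ f, RainbowOK G a b c1 c2 S1 S2 f := by
  intro d
  induction d using Nat.strong_induction_on with
  | _ d ih =>
  intro a b hd hd2 hb ht c1 c2 S1 S2 h12 hinv1 hinv2
  have hab' : adjN G a b := tight_adj hG ht (by omega) hb
  rcases eq_or_lt_of_le hd2 with hdeq | hd3
  · -- base case : b = a + 2
    have hb2 : b = a + 2 := by omega
    subst hb2
    refine ⟨fun v => if v = a then {c1} else if v = a+2 then {c2}
      else if v = a+1 then Finset.univ \ {c1, c2} else ∅, ?_, ?_, ?_, ?_, ?_, ?_, ?_⟩
    · simp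
    · simp [show a + 2 ≠ a by omega]
    · intro v hv
      have h1 : v ≠ a := by omega
      have h2 : v ≠ a + 2 := by omega
      have h3 : v ≠ a + 1 := by omega
      simp [h1, h2, h3]
    · intro v hv1 hv2
      have h3 : v = a + 1 := by omega
      subst h3
      have h1 : a + 1 ≠ a := by omega
      have h2 : a + 1 ≠ a + 2 := by omega
      beta_reduce
      rw [if_neg h1, if_neg h2, if_pos rfl]
      constructor
      · rw [Finset.card_sdiff_of_subset (Finset.subset_univ _), Finset.card_univ]
        have : ({c1, c2} : Finset Col).card = 2 := by
          rw [Finset.card_insert_of_notMem (by simp [h12]), Finset.card_singleton]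
        rw [this]
        rfl
      · intro _
        intro u hu1 hu2 hadj
        have hne := adjN_ne hadj
        omega
    · intro v hv1 hv2 c
      have h3 : v = a + 1 := by omega
      subst h3
      by_cases hc1 : c = c1
      · refine mem_sees_adj (adjN_symm (side hG (by omega))) (le_refl _) (by omega) ?_
        simp [if_pos rfl, hc1]
      · by_cases hc2 : c = c2
        · refine mem_sees_adj (side hG (by omega)) (by omega) (le_refl _) ?_
          beta_reduce
          rw [if_neg (show a+1+1 ≠ a by omega), if_pos (show a+1+1 = a+2 by omega)]
          simp [hc2]
        · refine mem_sees_self (by omega) (by omega) (by omega) ?_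
          beta_reduce
          rw [if_neg (show a+1 ≠ a by omega), if_neg (show a+1 ≠ a+2 by omega), if_pos rfl]
          simp [hc1, hc2]
    · intro c _
      by_cases hc1 : c = c1
      · exact mem_sees_self (by omega) (le_refl _) (by omega) (by simp [hc1])
      · by_cases hc2 : c = c2
        · refine mem_sees_adj hab' (by omega) (le_refl _) ?_
          simp [show a + 2 ≠ a by omega, hc2]
        · refine mem_sees_adj (side hG (by omega)) (by omega) (by omega) ?_
          beta_reduce
          rw [if_neg (show a+1 ≠ a by omega), if_neg (show a+1 ≠ a+2 by omega), if_pos rfl]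
          simp [hc1, hc2]
    · intro c _
      by_cases hc1 : c = c1
      · refine mem_sees_adj (adjN_symm hab') (le_refl _) (by omega) (by simp [hc1])
      · by_cases hc2 : c = c2
        · refine mem_sees_self (by omega) (by omega) (le_refl _) ?_
          simp [show a + 2 ≠ a by omega, hc2]
        · refine mem_sees_adj (adjN_symm (side hG (by omega))) (by omega) (by omega) ?_
          beta_reduce
          rw [if_neg (show a+1 ≠ a by omega), if_neg (show a+1 ≠ a+2 by omega), if_pos rfl]
          simp [hc1, hc2]
  · -- inductive step : b - a ≥ 3
    obtain ⟨z, haz, hzb, hadjaz, hadjzb, hmax, ht1, ht2⟩ :=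
      tight_split hG ht (by omega) hb
    by_cases hza : z = a + 1
    · -- left-degenerate case : `a` is an ear of the interval
      subst hza
      have hcA : ∀ u, a ≤ u → u ≤ b → adjN G a u → u = a+1 ∨ u = b := by
        intro u h1 h2 hu
        have hne := adjN_ne hu
        rcases eq_or_lt_of_le h2 with rfl | hub
        · right; rfl
        · left
          by_contra hc
          exact hmax u (by omega) hub hu
      obtain ⟨e, he⟩ := hinv1 hcA
      rw [Finset.mem_sdiff] at he
      have he1 : e ≠ c1 := by intro h; apply he.2; simp [h]
      have he2 : e ≠ c2 := by intro h; apply he.2; simp [h]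
      obtain ⟨cz, hcz1, hcz2, hcov⟩ := cover_choice h12 he.1 he1 he2
      obtain ⟨f2, hf2a, hf2b, hf2van, hf2sz, hf2int, hf2ca, hf2cb⟩ :=
        ih (d-1) (by omega) (a+1) b (by omega) (by omega) hb ht2 cz c2 {c1} (S2 ∪ {c1}) hcz2
          (fun _ => ⟨c1, by
            rw [Finset.mem_sdiff]
            refine ⟨Finset.mem_singleton_self _, ?_⟩
            simp only [Finset.mem_insert, Finset.mem_singleton]
            push_neg
            exact ⟨Ne.symm hcz1, h12⟩⟩)
          (fun _ => ⟨c1, by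
            rw [Finset.mem_sdiff]
            refine ⟨Finset.mem_union_right _ (Finset.mem_singleton_self _), ?_⟩
            simp only [Finset.mem_insert, Finset.mem_singleton]
            push_neg
            exact ⟨Ne.symm hcz1, h12⟩⟩)
      have hagree : ∀ u, a+1 ≤ u → u ≤ b →
          (fun v => if v = a then ({c1} : Finset Col) else f2 v) u = f2 u := by
        intro u h1 _
        beta_reduce
        rw [if_neg (by omega)]
      refine ⟨fun v => if v = a then {c1} else f2 v, by simp, ?_, ?_, ?_, ?_, ?_, ?_⟩
      · beta_reduce; rw [if_neg (by omega)]; exact hf2b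
      · intro v hv
        beta_reduce; rw [if_neg (by omega)]
        exact hf2van v (by omega)
      · intro v hv1 hv2
        beta_reduce; rw [if_neg (by omega)]
        rcases eq_or_lt_of_le (Nat.succ_le_of_lt hv1) with hveq | hvgt
        · subst hveq
          rw [hf2a]
          refine ⟨by simp, ?_⟩
          intro hcard
          simp at hcard
        · obtain ⟨hc1, hc2⟩ := hf2sz v (by omega) hv2
          refine ⟨hc1, fun hc => ?_⟩
          exact earI_mono hG hadjzb (by omega) (le_refl _) (by omega) hv2 (hc2 hc)
      · intro v hv1 hv2 c
        rcases eq_or_lt_of_le (Nat.succ_le_of_lt hv1) with hveq | hvgt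
        · -- v = a + 1 = z
          subst hveq
          by_cases hcc : c = c1
          · refine mem_sees_adj (adjN_symm hadjaz) (le_refl _) (by omega) ?_
            beta_reduce; rw [if_pos rfl]; simp [hcc]
          · have := hf2ca c (by simp [hcc])
            exact sees_mono_agree (by omega) (le_refl _) hagree this
        · have := hf2int v (by omega) hv2 c
          exact sees_mono_agree (by omega) (le_refl _) hagree this
      · intro c hc
        have := hcov (by rw [Finset.mem_sdiff]; exact ⟨Finset.mem_univ _, hc⟩)
        simp only [Finset.mem_insert, Finset.mem_singleton] at this
        rcases this with rfl | rfl | rfl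
        · refine mem_sees_self (by omega) (le_refl _) (by omega) ?_
          beta_reduce; rw [if_pos rfl]; simp
        · refine mem_sees_adj hab' (by omega) (le_refl _) ?_
          beta_reduce; rw [if_neg (by omega)]; rw [hf2b]; simp
        · refine mem_sees_adj hadjaz (by omega) (by omega) ?_
          beta_reduce; rw [if_neg (by omega)]; rw [hf2a]; simp
      · intro c hc
        by_cases hcc : c = c1
        · refine mem_sees_adj (adjN_symm hab') (le_refl _) (by omega) ?_
          beta_reduce; rw [if_pos rfl]; simp [hcc]
        · have := hf2cb c (by
            rw [Finset.mem_union]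
            push_neg
            exact ⟨hc, by simp [hcc]⟩)
          exact sees_mono_agree (by omega) (le_refl _) hagree this
    · by_cases hzbb : z = b - 1
      · -- right-degenerate case : `b` is an ear of the interval
        have hcB : ∀ u, a ≤ u → u ≤ b → adjN G b u → u = b-1 ∨ u = a := by
          intro u h1 h2 hu
          have hne := adjN_ne hu
          rcases eq_or_lt_of_le h1 with rfl | hau
          · right; rfl
          · left
            by_contra hc
            have huz : u < z := by omega
            exact cross hG hau huz (by omega) hb hadjaz (adjN_symm hu)
        obtain ⟨e, he⟩ := hinv2 hcB
        rw [Finset.mem_sdiff] at he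
        have he1 : e ≠ c1 := by intro h; apply he.2; simp [h]
        have he2 : e ≠ c2 := by intro h; apply he.2; simp [h]
        obtain ⟨cz, hcz1, hcz2, hcov⟩ := cover_choice h12 he.1 he1 he2
        obtain ⟨f1, hf1a, hf1b, hf1van, hf1sz, hf1int, hf1ca, hf1cb⟩ :=
          ih (d-1) (by omega) a z (by omega) (by omega) (by omega) ht1 c1 cz
            (S1 ∪ {c2}) {c2} (Ne.symm hcz1)
            (fun _ => ⟨c2, by
              rw [Finset.mem_sdiff]
              refine ⟨Finset.mem_union_right _ (Finset.mem_singleton_self _), ?_⟩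
              simp only [Finset.mem_insert, Finset.mem_singleton]
              push_neg
              exact ⟨Ne.symm h12, Ne.symm hcz2⟩⟩)
            (fun _ => ⟨c2, by
              rw [Finset.mem_sdiff]
              refine ⟨Finset.mem_singleton_self _, ?_⟩
              simp only [Finset.mem_insert, Finset.mem_singleton]
              push_neg
              exact ⟨Ne.symm h12, Ne.symm hcz2⟩⟩)
        have hagree : ∀ u, a ≤ u → u ≤ z →
            (fun v => if v = b then ({c2} : Finset Col) else f1 v) u = f1 u := by
          intro u _ h2
          beta_reduce
          rw [if_neg (by omega)]
        refine ⟨fun v => if v = b then {c2} else f1 v, ?_, by simp, ?_, ?_, ?_, ?_, ?_⟩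
        · beta_reduce; rw [if_neg (by omega)]; exact hf1a
        · intro v hv
          beta_reduce; rw [if_neg (by omega)]
          exact hf1van v (by omega)
        · intro v hv1 hv2
          beta_reduce; rw [if_neg (by omega)]
          rcases eq_or_lt_of_le (Nat.le_of_lt_succ (show v < z + 1 by omega)) with hveq | hvlt
          · subst hveq
            rw [hf1b]
            refine ⟨by simp, ?_⟩
            intro hcard
            simp at hcard
          · obtain ⟨hc1, hc2⟩ := hf1sz v hv1 hvlt
            refine ⟨hc1, fun hc => ?_⟩
            exact earI_mono hG hadjaz (le_refl _) (by omega) hv1 hvlt (hc2 hc)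
        · intro v hv1 hv2 c
          rcases eq_or_lt_of_le (Nat.le_of_lt_succ (show v < z + 1 by omega)) with hveq | hvlt
          · subst hveq
            by_cases hcc : c = c2
            · refine mem_sees_adj hadjzb (by omega) (le_refl _) ?_
              beta_reduce; rw [if_pos rfl]; simp [hcc]
            · have := hf1cb c (by simp [hcc])
              exact sees_mono_agree (le_refl _) (by omega) hagree this
          · have := hf1int v hv1 hvlt c
            exact sees_mono_agree (le_refl _) (by omega) hagree this
        · intro c hc
          by_cases hcc : c = c2
          · refine mem_sees_adj hab' (by omega) (le_refl _) ?_
            beta_reduce; rw [if_pos rfl]; simp [hcc]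
          · have := hf1ca c (by
              rw [Finset.mem_union]
              push_neg
              exact ⟨hc, by simp [hcc]⟩)
            exact sees_mono_agree (le_refl _) (by omega) hagree this
        · intro c hc
          have := hcov (by rw [Finset.mem_sdiff]; exact ⟨Finset.mem_univ _, hc⟩)
          simp only [Finset.mem_insert, Finset.mem_singleton] at this
          rcases this with rfl | rfl | rfl
          · refine mem_sees_adj (adjN_symm hab') (le_refl _) (by omega) ?_
            beta_reduce; rw [if_neg (by omega)]; rw [hf1a]; simp
          · refine mem_sees_self (by omega) (by omega) (le_refl _) ?_
            beta_reduce; rw [if_pos rfl]; simp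
          · refine mem_sees_adj (adjN_symm hadjzb) (by omega) (by omega) ?_
            beta_reduce; rw [if_neg (by omega)]; rw [hf1b]; simp
      · -- middle case : both pieces have at least 3 vertices
        have hz1 : a + 1 < z := by
          rcases Nat.lt_or_ge (a+1) z with h | h
          · exact h
          · exact absurd (by omega : z = a + 1) hza
        have hz2 : z < b - 1 := by
          rcases Nat.lt_or_ge z (b-1) with h | h
          · exact h
          · exact absurd (by omega : z = b - 1) hzbb
        obtain ⟨cz, hcz1, hcz2⟩ := exists_third c1 c2
        obtain ⟨d1, hd1a, hd1b⟩ := exists_third c1 cz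
        obtain ⟨d2, hd2'⟩ := exists_col_notin {d1, cz, c2} (by
          apply le_trans (Finset.card_insert_le _ _)
          have := Finset.card_insert_le cz ({c2} : Finset Col)
          simp at this ⊢
          omega)
        have hd2a : d2 ≠ d1 := by intro h; apply hd2'; simp [h]
        have hd2b : d2 ≠ cz := by intro h; apply hd2'; simp [h]
        have hd2c : d2 ≠ c2 := by intro h; apply hd2'; simp [h]
        obtain ⟨f1, hf1a, hf1b, hf1van, hf1sz, hf1int, hf1ca, hf1cb⟩ :=
          ih (z-a) (by omega) a z (by omega) (by omega) (by omega) ht1 c1 cz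
            (S1 ∪ {c2}) {d1} (Ne.symm hcz1)
            (fun _ => ⟨c2, by
              rw [Finset.mem_sdiff]
              refine ⟨Finset.mem_union_right _ (Finset.mem_singleton_self _), ?_⟩
              simp only [Finset.mem_insert, Finset.mem_singleton]
              push_neg
              exact ⟨Ne.symm h12, Ne.symm hcz2⟩⟩)
            (fun _ => ⟨d1, by
              rw [Finset.mem_sdiff]
              refine ⟨Finset.mem_singleton_self _, ?_⟩
              simp only [Finset.mem_insert, Finset.mem_singleton]
              push_neg
              exact ⟨hd1a, hd1b⟩⟩)
        obtain ⟨f2, hf2a, hf2b, hf2van, hf2sz, hf2int, hf2ca, hf2cb⟩ :=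
          ih (b-z) (by omega) z b (by omega) (by omega) hb ht2 cz c2
            {d2} (S2 ∪ {c1}) hcz2
            (fun _ => ⟨d2, by
              rw [Finset.mem_sdiff]
              refine ⟨Finset.mem_singleton_self _, ?_⟩
              simp only [Finset.mem_insert, Finset.mem_singleton]
              push_neg
              exact ⟨hd2b, hd2c⟩⟩)
            (fun _ => ⟨c1, by
              rw [Finset.mem_sdiff]
              refine ⟨Finset.mem_union_right _ (Finset.mem_singleton_self _), ?_⟩
              simp only [Finset.mem_insert, Finset.mem_singleton]
              push_neg
              exact ⟨Ne.symm hcz1, h12⟩⟩)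
        have hagree1 : ∀ u, a ≤ u → u ≤ z →
            (fun v => if v ≤ z then f1 v else f2 v) u = f1 u := by
          intro u _ h2
          beta_reduce
          rw [if_pos h2]
        have hagree2 : ∀ u, z ≤ u → u ≤ b →
            (fun v => if v ≤ z then f1 v else f2 v) u = f2 u := by
          intro u h1 _
          beta_reduce
          rcases eq_or_lt_of_le h1 with rfl | h1'
          · rw [if_pos (le_refl _), hf1b, hf2a]
          · rw [if_neg (by omega)]
        refine ⟨fun v => if v ≤ z then f1 v else f2 v, ?_, ?_, ?_, ?_, ?_, ?_, ?_⟩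
        · beta_reduce; rw [if_pos (by omega)]; exact hf1a
        · beta_reduce; rw [if_neg (by omega)]; exact hf2b
        · intro v hv
          beta_reduce
          rcases hv with hv | hv
          · rw [if_pos (by omega)]; exact hf1van v (Or.inl hv)
          · rw [if_neg (by omega)]; exact hf2van v (Or.inr hv)
        · intro v hv1 hv2
          beta_reduce
          rcases Nat.lt_trichotomy v z with hvz | hvz | hvz
          · rw [if_pos (by omega)]
            obtain ⟨hc1, hc2⟩ := hf1sz v hv1 hvz
            exact ⟨hc1, fun hc =>
              earI_mono hG hadjaz (le_refl _) (by omega) hv1 hvz (hc2 hc)⟩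
          · subst hvz
            rw [if_pos (le_refl _), hf1b]
            refine ⟨by simp, ?_⟩
            intro hcard
            simp at hcard
          · rw [if_neg (by omega)]
            obtain ⟨hc1, hc2⟩ := hf2sz v hvz hv2
            exact ⟨hc1, fun hc =>
              earI_mono hG hadjzb (by omega) (le_refl _) hvz hv2 (hc2 hc)⟩
        · intro v hv1 hv2 c
          rcases Nat.lt_trichotomy v z with hvz | hvz | hvz
          · exact sees_mono_agree (le_refl _) (by omega) hagree1 (hf1int v hv1 hvz c)
          · subst hvz
            by_cases hcc : c = d2
            · have := hf1cb c (by
                simp only [Finset.mem_singleton]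
                rw [hcc]
                exact hd2a)
              exact sees_mono_agree (le_refl _) (by omega) hagree1 this
            · have := hf2ca c (by simp [hcc])
              exact sees_mono_agree (by omega) (le_refl _) hagree2 this
          · exact sees_mono_agree (by omega) (le_refl _) hagree2 (hf2int v hvz hv2 c)
        · intro c hc
          by_cases hcc : c = c2
          · refine mem_sees_adj hab' (by omega) (le_refl _) ?_
            beta_reduce; rw [if_neg (by omega)]; rw [hf2b]; simp [hcc]
          · have := hf1ca c (by
              rw [Finset.mem_union]
              push_neg
              exact ⟨hc, by simp [hcc]⟩)
            exact sees_mono_agree (le_refl _) (by omega) hagree1 this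
        · intro c hc
          by_cases hcc : c = c1
          · refine mem_sees_adj (adjN_symm hab') (le_refl _) (by omega) ?_
            beta_reduce; rw [if_pos (by omega)]; rw [hf1a]; simp [hcc]
          · have := hf2cb c (by
              rw [Finset.mem_union]
              push_neg
              exact ⟨hc, by simp [hcc]⟩)
            exact sees_mono_agree (by omega) (le_refl _) hagree2 this

omit [NeZero n] hG in
lemma col_cases (c : Col) : c = 0 ∨ c = 1 ∨ c = 2 ∨ c = 3 := by revert c; decide

omit [NeZero n] hG in
lemma sees_to_global {a b v : ℕ} {f F : ℕ → Finset Col} {c : Col}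
    (hagree : ∀ u, a ≤ u → u ≤ b → F u = f u)
    (h : c ∈ sees G a b f v) : ∃ u, u < n ∧ (u = v ∨ adjN G v u) ∧ c ∈ F u := by
  rw [mem_sees] at h
  obtain ⟨u, h1, h2, h3, h4, h5⟩ := h
  exact ⟨u, h1, h4, by rw [hagree u h2 h3]; exact h5⟩

omit hG in
lemma ear_translate {v : ℕ} (hv : v < n) (x y : ℕ) (hx : x < n) (hy : y < n) (hxy : x ≠ y)
    (hax : adjN G v x) (hay : adjN G v y) (hall : ∀ u, adjN G v u → u = x ∨ u = y) :
    (G.neighborSet ⟨v, hv⟩).ncard = 2 := by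
  have hset : G.neighborSet ⟨v, hv⟩ = {⟨x, hx⟩, ⟨y, hy⟩} := by
    ext w
    simp only [SimpleGraph.mem_neighborSet, Set.mem_insert_iff, Set.mem_singleton_iff]
    constructor
    · intro h
      rcases hall w.1 ⟨hv, w.2, h⟩ with h' | h'
      · left; exact Fin.ext h'
      · right; exact Fin.ext h'
    · rintro (rfl | rfl)
      · obtain ⟨h1, h2, hh⟩ := hax; exact hh
      · obtain ⟨h1, h2, hh⟩ := hay; exact hh
  rw [hset, Set.ncard_pair (by
    intro h
    exact hxy (by simpa using congrArg Fin.val h))]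

/-- existence of a global rainbow coloring -/
lemma exists_coloring (hn : 4 ≤ n) :
    ∃ F : ℕ → Finset Col,
      (∀ v, v < n → (F v).card ≤ 2) ∧
      (∀ v (h : v < n), (F v).card = 2 → (G.neighborSet ⟨v, h⟩).ncard = 2) ∧
      (∀ v, v < n → ∀ c : Col, ∃ u, u < n ∧ (u = v ∨ adjN G v u) ∧ c ∈ F u) := by
  have htop : Tight G 0 (n-1) := tight_top hG hn
  have hbn : n - 1 < n := by omega
  obtain ⟨z, hz1, hz2, hadj0z, hadjzn, hmax, ht1, ht2⟩ :=
    tight_split hG htop (by omega) hbn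
  by_cases hA : ∀ u, adjN G 0 u → u = 1 ∨ u = n - 1
  · -- vertex 0 is an ear; apex z = 1
    have hz : z = 1 := by
      rcases hA z hadj0z with h | h
      · exact h
      · omega
    subst hz
    obtain ⟨f, hfa, hfb, hfvan, hfsz, hfint, hfca, hfcb⟩ :=
      rainbow hG (n-2) 1 (n-1) (by omega) (by omega) hbn ht2 0 1 {2, 3} {2, 3}
        (by decide) (fun _ => ⟨2, by decide⟩) (fun _ => ⟨2, by decide⟩)
    have hagree : ∀ u, 1 ≤ u → u ≤ n - 1 →
        (fun v => if v = 0 then ({2, 3} : Finset Col) else f v) u = f u := by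
      intro u h1 _
      beta_reduce
      rw [if_neg (by omega)]
    refine ⟨fun v => if v = 0 then {2, 3} else f v, ?_, ?_, ?_⟩
    · intro v hv
      beta_reduce
      by_cases hv0 : v = 0
      · rw [if_pos hv0]; decide
      · rw [if_neg hv0]
        rcases Nat.lt_trichotomy v (n-1) with h | h | h
        · rcases Nat.lt_or_ge 1 v with h' | h'
          · exact (hfsz v h' h).1
          · have : v = 1 := by omega
            rw [this, hfa]; decide
        · rw [h, hfb]; decide
        · omega
    · intro v hv hcard
      beta_reduce at hcard
      by_cases hv0 : v = 0
      · subst hv0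
        exact ear_translate hv 1 (n-1) (by omega) hbn (by omega)
          (side hG (by omega)) (wrapSide hG (by omega)) hA
      · rw [if_neg hv0] at hcard
        have hv1 : 1 < v := by
          by_contra h
          have : v = 1 := by omega
          rw [this, hfa] at hcard
          simp at hcard
        have hvn : v < n - 1 := by
          by_contra h
          have : v = n - 1 := by omega
          rw [this, hfb] at hcard
          simp at hcard
        have hear := (hfsz v hv1 hvn).2 hcard
        have hear' : EarI G 0 (n-1) v :=
          earI_mono hG hadjzn (by omega) (le_refl _) hv1 hvn hear
        refine ear_translate hv (v-1) (v+1) (by omega) (by omega) (by omega)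
          (adjN_symm (by
            have := side hG (show (v-1)+1 < n by omega)
            rwa [show (v-1)+1 = v by omega] at this))
          (side hG (by omega)) ?_
        intro u hu
        have := adjN_lt_right hu
        exact hear' u (by omega) (by omega) hu
    · intro v hv c
      by_cases hv0 : v = 0
      · subst hv0
        rcases col_cases c with rfl | rfl | rfl | rfl
        · refine ⟨1, by omega, Or.inr (side hG (by omega)), ?_⟩
          beta_reduce; rw [if_neg (by omega), hfa]; decide
        · refine ⟨n-1, by omega, Or.inr (wrapSide hG (by omega)), ?_⟩
          beta_reduce; rw [if_neg (by omega), hfb]; decide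
        · exact ⟨0, by omega, Or.inl rfl, by beta_reduce; rw [if_pos rfl]; decide⟩
        · exact ⟨0, by omega, Or.inl rfl, by beta_reduce; rw [if_pos rfl]; decide⟩
      · by_cases hc23 : c = 2 ∨ c = 3
        · -- colors of vertex 0 : reachable iff adjacent to 0 ... use u = 0 when possible
          by_cases hadj : adjN G v 0
          · refine ⟨0, by omega, Or.inr hadj, ?_⟩
            beta_reduce; rw [if_pos rfl]
            rcases hc23 with rfl | rfl <;> decide
          · -- v not adjacent to 0 : get the color from inside
            have hv1 : 1 ≤ v := by omega
            rcases Nat.lt_trichotomy v (n-1) with h | h | h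
            · rcases eq_or_lt_of_le hv1 with heq | hgt
              · -- v = 1 : f's corner guarantee has S1 = {2,3} ... but 2,3 are excused!
                -- fortunately 1 is adjacent to 0 via a side, contradiction with hadj
                rw [← heq] at hadj
                have h01 : adjN G 0 1 := by
                  have := side hG (show 0 + 1 < n by omega)
                  simpa using this
                exact absurd (adjN_symm h01) hadj
              · exact sees_to_global hagree (hfint v hgt h c)
            · -- v = n-1 : adjacent to 0 by the wrap side, contradiction
              subst h
              exact absurd (adjN_symm (wrapSide hG (by omega))) hadj
            · omega
        · have hc : c ∉ ({2, 3} : Finset Col) := by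
            simp only [Finset.mem_insert, Finset.mem_singleton]
            tauto
          have hv1 : 1 ≤ v := by omega
          rcases Nat.lt_trichotomy v (n-1) with h | h | h
          · rcases eq_or_lt_of_le hv1 with heq | hgt
            · rw [← heq]
              exact sees_to_global hagree (hfca c hc)
            · exact sees_to_global hagree (hfint v hgt h c)
          · rw [h]
            exact sees_to_global hagree (hfcb c hc)
          · omega
  · by_cases hB : ∀ u, adjN G (n-1) u → u = n - 2 ∨ u = 0
    · -- vertex n-1 is an ear; apex z = n-2
      have hz : z = n - 2 := by
        rcases hB z (adjN_symm hadjzn) with h | h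
        · exact h
        · omega
      subst hz
      obtain ⟨f, hfa, hfb, hfvan, hfsz, hfint, hfca, hfcb⟩ :=
        rainbow hG (n-2) 0 (n-2) (by omega) (by omega) (by omega) ht1 0 1 {2, 3} {2, 3}
          (by decide) (fun _ => ⟨2, by decide⟩) (fun _ => ⟨2, by decide⟩)
      have hagree : ∀ u, 0 ≤ u → u ≤ n - 2 →
          (fun v => if v = n-1 then ({2, 3} : Finset Col) else f v) u = f u := by
        intro u _ h2
        beta_reduce
        rw [if_neg (by omega)]
      have hside' : adjN G (n-2) (n-1) := by
        have := side hG (show (n-2)+1 < n by omega)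
        rwa [show (n-2)+1 = n-1 by omega] at this
      refine ⟨fun v => if v = n-1 then {2, 3} else f v, ?_, ?_, ?_⟩
      · intro v hv
        beta_reduce
        by_cases hv0 : v = n-1
        · rw [if_pos hv0]; decide
        · rw [if_neg hv0]
          rcases Nat.lt_trichotomy v (n-2) with h | h | h
          · rcases Nat.eq_zero_or_pos v with rfl | h'
            · rw [hfa]; decide
            · exact (hfsz v (by omega) h).1
          · rw [h, hfb]; decide
          · rw [hfvan v (by omega)]; decide
      · intro v hv hcard
        beta_reduce at hcard
        by_cases hv0 : v = n-1
        · subst hv0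
          exact ear_translate hv (n-2) 0 (by omega) (by omega) (by omega)
            (adjN_symm hside') (adjN_symm (wrapSide hG (by omega))) hB
        · rw [if_neg hv0] at hcard
          have hv1 : 0 < v := by
            by_contra h
            have : v = 0 := by omega
            rw [this, hfa] at hcard
            simp at hcard
          have hvn : v < n - 2 := by
            by_contra h
            rcases Nat.lt_trichotomy v (n-2) with h' | h' | h'
            · omega
            · rw [h', hfb] at hcard; simp at hcard
            · rw [hfvan v (by omega)] at hcard; simp at hcard
          have hear := (hfsz v hv1 hvn).2 hcard
          have hear' : EarI G 0 (n-1) v :=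
            earI_mono hG hadj0z (le_refl _) (by omega) hv1 hvn hear
          refine ear_translate hv (v-1) (v+1) (by omega) (by omega) (by omega)
            (adjN_symm (by
              have := side hG (show (v-1)+1 < n by omega)
              rwa [show (v-1)+1 = v by omega] at this))
            (side hG (by omega)) ?_
          intro u hu
          have := adjN_lt_right hu
          exact hear' u (by omega) (by omega) hu
      · intro v hv c
        by_cases hv0 : v = n-1
        · subst hv0
          rcases col_cases c with rfl | rfl | rfl | rfl
          · refine ⟨0, by omega, Or.inr (adjN_symm (wrapSide hG (by omega))), ?_⟩
            beta_reduce; rw [if_neg (by omega), hfa]; decide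
          · refine ⟨n-2, by omega, Or.inr (adjN_symm hside'), ?_⟩
            beta_reduce; rw [if_neg (by omega), hfb]; decide
          · exact ⟨n-1, by omega, Or.inl rfl, by beta_reduce; rw [if_pos rfl]; decide⟩
          · exact ⟨n-1, by omega, Or.inl rfl, by beta_reduce; rw [if_pos rfl]; decide⟩
        · by_cases hc23 : c = 2 ∨ c = 3
          · by_cases hadj : adjN G v (n-1)
            · refine ⟨n-1, by omega, Or.inr hadj, ?_⟩
              beta_reduce; rw [if_pos rfl]
              rcases hc23 with rfl | rfl <;> decide
            · rcases Nat.lt_trichotomy v (n-2) with h | h | h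
              · rcases Nat.eq_zero_or_pos v with rfl | h'
                · exact absurd (wrapSide hG (by omega)) hadj
                · exact sees_to_global hagree (hfint v (by omega) h c)
              · subst h
                exact absurd hside' hadj
              · omega
          · have hc : c ∉ ({2, 3} : Finset Col) := by
              simp only [Finset.mem_insert, Finset.mem_singleton]
              tauto
            rcases Nat.lt_trichotomy v (n-2) with h | h | h
            · rcases Nat.eq_zero_or_pos v with rfl | h'
              · exact sees_to_global hagree (hfca c hc)
              · exact sees_to_global hagree (hfint v (by omega) h c)
            · rw [h]
              exact sees_to_global hagree (hfcb c hc)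
            · omega
    · -- neither endpoint of the root side is an ear
      obtain ⟨f, hfa, hfb, hfvan, hfsz, hfint, hfca, hfcb⟩ :=
        rainbow hG (n-1) 0 (n-1) (by omega) (by omega) hbn htop 0 1 ∅ ∅
          (by decide)
          (fun h => absurd (fun u hu => by
            have := adjN_lt_right hu
            exact h u (by omega) (by omega) hu) hA)
          (fun h => absurd (fun u hu => by
            have := adjN_lt_right hu
            rcases h u (by omega) (by omega) hu with h' | h'
            · left; omega
            · right; exact h') hB)
      have hagree : ∀ u, 0 ≤ u → u ≤ n - 1 → f u = f u := fun _ _ _ => rfl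
      refine ⟨f, ?_, ?_, ?_⟩
      · intro v hv
        rcases Nat.lt_trichotomy v (n-1) with h | h | h
        · rcases Nat.eq_zero_or_pos v with rfl | h'
          · rw [hfa]; decide
          · exact (hfsz v (by omega) h).1
        · rw [h, hfb]; decide
        · omega
      · intro v hv hcard
        have hv1 : 0 < v := by
          by_contra h
          have : v = 0 := by omega
          rw [this, hfa] at hcard
          simp at hcard
        have hvn : v < n - 1 := by
          by_contra h
          have : v = n - 1 := by omega
          rw [this, hfb] at hcard
          simp at hcard
        have hear := (hfsz v hv1 hvn).2 hcard
        refine ear_translate hv (v-1) (v+1) (by omega) (by omega) (by omega)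
          (adjN_symm (by
            have := side hG (show (v-1)+1 < n by omega)
            rwa [show (v-1)+1 = v by omega] at this))
          (side hG (by omega)) ?_
        intro u hu
        have := adjN_lt_right hu
        exact hear u (by omega) (by omega) hu
      · intro v hv c
        rcases Nat.lt_trichotomy v (n-1) with h | h | h
        · rcases Nat.eq_zero_or_pos v with rfl | h'
          · exact sees_to_global hagree (hfca c (by simp))
          · exact sees_to_global hagree (hfint v (by omega) h c)
        · rw [h]
          exact sees_to_global hagree (hfcb c (by simp))
        · omega

lemma exists_good_dom (hn : 4 ≤ n) :
    ∃ D : Set (Fin n), IsDomSet G D ∧ 4 * D.ncard ≤ n + degTwoCount G := by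
  obtain ⟨F, hcard, hearP, hrb⟩ := exists_coloring hG hn
  classical
  have hkdef : degTwoCount G = (Finset.univ.filter
      (fun v : Fin n => (G.neighborSet v).ncard = 2)).card := by
    unfold degTwoCount
    rw [Set.ncard_eq_toFinset_card', Set.toFinset_setOf]
  have hpt : ∀ x : Fin n, (F x.1).card ≤
      1 + (if (G.neighborSet x).ncard = 2 then 1 else 0) := by
    intro x
    by_cases h2 : (F x.1).card = 2
    · have hthis := hearP x.1 x.2 h2
      rw [Fin.eta] at hthis
      rw [if_pos hthis]
      omega
    · have := hcard x.1 x.2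
      split <;> omega
  have hsum : ∑ x : Fin n, (F x.1).card ≤ n + degTwoCount G := by
    calc ∑ x : Fin n, (F x.1).card
        ≤ ∑ x : Fin n, (1 + if (G.neighborSet x).ncard = 2 then 1 else 0) :=
          Finset.sum_le_sum (fun x _ => hpt x)
      _ = n + degTwoCount G := by
          rw [Finset.sum_add_distrib, Finset.sum_const, Finset.card_univ,
            Fintype.card_fin, hkdef, Finset.card_filter]
          simp [Nat.smul_one_eq_cast]
  set Dc : Col → Finset (Fin n) := fun c => Finset.univ.filter (fun x => c ∈ F x.1) with hDc
  have hclasses : ∑ c : Col, (Dc c).card = ∑ x : Fin n, (F x.1).card := by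
    simp only [hDc, Finset.card_filter]
    rw [Finset.sum_comm]
    apply Finset.sum_congr rfl
    intro x _
    rw [← Finset.card_filter]
    congr 1
    ext c
    simp
  have hex : ∃ c : Col, 4 * (Dc c).card ≤ n + degTwoCount G := by
    by_contra hcon
    push_neg at hcon
    have hge : ∑ c : Col, (n + degTwoCount G + 1) ≤ ∑ c : Col, 4 * (Dc c).card :=
      Finset.sum_le_sum (fun c _ => by have := hcon c; omega)
    rw [Finset.sum_const, Finset.card_univ] at hge
    have h4 : Fintype.card Col = 4 := by rfl
    rw [h4] at hge
    rw [← Finset.mul_sum, hclasses] at hge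
    simp only [smul_eq_mul] at hge
    omega
  obtain ⟨c, hc⟩ := hex
  refine ⟨↑(Dc c), ?_, ?_⟩
  · intro v hv
    have hvc : c ∉ F v.1 := by
      intro hmem
      apply hv
      simp only [hDc, Finset.coe_filter, Set.mem_setOf_eq]
      exact ⟨Finset.mem_univ _, hmem⟩
    obtain ⟨u, hun, hor, hcu⟩ := hrb v.1 v.2 c
    rcases hor with rfl | hadj
    · exact absurd hcu hvc
    · obtain ⟨h1, h2, hAdj⟩ := hadj
      refine ⟨⟨u, h2⟩, ?_, ?_⟩
      · simp only [hDc, Finset.coe_filter, Set.mem_setOf_eq]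
        exact ⟨Finset.mem_univ _, hcu⟩
      · exact hAdj.symm
  · rw [Set.ncard_coe_finset]
    exact hc

end withMop
end MopProof

theorem mop_disjDomNum_le_domNum_le {n : ℕ} [NeZero n] (G : SimpleGraph (Fin n))
    (hn : 4 ≤ n) (hG : IsMop G) :
    disjDomNum G ≤ domNum G ∧ domNum G ≤ (n + degTwoCount G) / 4 := by
  constructor
  · apply csInf_le_csInf (OrderBot.bddBelow _)
    · exact ⟨Set.univ.ncard, Set.univ, fun v hv => absurd (Set.mem_univ v) hv, rfl⟩
    · rintro k ⟨D, hD, rfl⟩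
      exact ⟨D, fun v hv => Or.inl (hD v hv), rfl⟩
  · obtain ⟨D, hdom, hbound⟩ := MopProof.exists_good_dom hG hn
    have h1 : domNum G ≤ D.ncard := Nat.sInf_le ⟨D, hdom, rfl⟩
    have h2 : D.ncard ≤ (n + degTwoCount G) / 4 :=
      (Nat.le_div_iff_mul_le (by norm_num)).2 (by omega)
    exact le_trans h1 h2
end

section
/- Let G be a maximal outerplanar graph of order n ≥ 4. Define the contraction of the outer edge {n−2, n−1} of G as follows: let f : Fin n → Fin (n−1) be the map sending x to x for x < n−1 and sending n−1 to n−2, and let H be the simple graph on Fin (n−1) in which distinct vertices a and b are adjacent if and only if there exist vertices x, y of G with G.Adj x y, f x = a and f y = b. Then H is a maximal outerplanar graph of order n−1, i.e., H satisfies conditions (i)–(iii) of the representation. -/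
open SimpleGraph

noncomputable def pairOf {m : ℕ} : Sym2 (Fin m) → ℕ × ℕ :=
  Sym2.lift ⟨fun a b => (min a.val b.val, max a.val b.val), fun a b => by
    simp [min_comm, max_comm]⟩

lemma pairOf_mk {m : ℕ} (a b : Fin m) :
    pairOf s(a, b) = (min a.val b.val, max a.val b.val) := rfl

lemma pairOf_inj {m : ℕ} : Function.Injective (pairOf (m := m)) := by
  intro e e'
  induction e using Sym2.ind with | _ a b =>
  induction e' using Sym2.ind with | _ c d =>
  intro h
  rw [pairOf_mk, pairOf_mk, Prod.ext_iff] at h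
  rw [Sym2.eq_iff]
  have : (a.val = c.val ∧ b.val = d.val) ∨ (a.val = d.val ∧ b.val = c.val) := by omega
  rcases this with ⟨h1, h2⟩ | ⟨h1, h2⟩
  · exact Or.inl ⟨Fin.ext h1, Fin.ext h2⟩
  · exact Or.inr ⟨Fin.ext h1, Fin.ext h2⟩

lemma pairOf_edge {m : ℕ} {K : SimpleGraph (Fin m)} {e : Sym2 (Fin m)}
    (he : e ∈ K.edgeSet) :
    ∃ u v : Fin m, K.Adj u v ∧ u.val = (pairOf e).1 ∧ v.val = (pairOf e).2
      ∧ u.val < v.val := by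
  induction e using Sym2.ind with | _ a b =>
  rw [SimpleGraph.mem_edgeSet] at he
  have hne : a.val ≠ b.val := fun h => he.ne (Fin.ext h)
  rw [pairOf_mk]
  rcases le_total a.val b.val with hab | hab
  · exact ⟨a, b, he, by omega, by omega, by omega⟩
  · exact ⟨b, a, he.symm, by omega, by omega, by omega⟩


lemma chord_bound : ∀ N : ℕ, ∀ D : Finset (ℕ × ℕ),
    (∀ p ∈ D, p.1 + 2 ≤ p.2 ∧ p.2 ≤ N) →
    (∀ p ∈ D, ∀ q ∈ D, ¬(p.1 < q.1 ∧ q.1 < p.2 ∧ p.2 < q.2)) →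
    D.card ≤ N - 1 := by
  intro N
  induction N using Nat.strong_induction_on with
  | _ N ih =>
    intro D hD hcross
    rcases D.eq_empty_or_nonempty with h | hne
    · simp [h]
    obtain ⟨p, hp, hmin⟩ := D.exists_min_image (fun q => q.2 - q.1) hne
    set x := p.1 with hx
    set y := p.2 with hy
    have hxy : x + 2 ≤ y ∧ y ≤ N := hD p hp
    set g := y - x - 1 with hgdef
    have hg : 1 ≤ g := by omega
    have hside : ∀ q ∈ D, q ≠ p → (q.1 ≤ x ∨ y ≤ q.1) ∧ (q.2 ≤ x ∨ y ≤ q.2) := by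
      intro q hq hqp
      have hq2 := hD q hq
      have hm := hmin q hq
      constructor
      · by_contra hcon
        push_neg at hcon
        have h1 : x < q.1 := hcon.1
        have h2 : q.1 < y := hcon.2
        rcases le_or_gt q.2 y with h3 | h3
        · omega
        · exact hcross p hp q hq ⟨h1, h2, h3⟩
      · by_contra hcon
        push_neg at hcon
        have h1 : x < q.2 := hcon.1
        have h2 : q.2 < y := hcon.2
        rcases le_or_gt x q.1 with h3 | h3
        · omega
        · exact hcross q hq p hp ⟨h3, h1, h2⟩
    set h : ℕ → ℕ := fun t => if t ≤ x then t else t - g with hhdef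
    have hmono : ∀ s t : ℕ, (s ≤ x ∨ y ≤ s) → (t ≤ x ∨ y ≤ t) → (h s < h t ↔ s < t) := by
      intro s t hs ht
      simp only [hhdef]
      split_ifs <;> omega
    have hinj : ∀ s t : ℕ, (s ≤ x ∨ y ≤ s) → (t ≤ x ∨ y ≤ t) → h s = h t → s = t := by
      intro s t hs ht
      simp only [hhdef]
      split_ifs <;> omega
    set D' := (D.erase p).image (fun q => (h q.1, h q.2)) with hD'
    have hcard : D'.card = (D.erase p).card := by
      apply Finset.card_image_of_injOn
      intro q hq r hr heq
      have hqD := Finset.mem_of_mem_erase hq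
      have hrD := Finset.mem_of_mem_erase hr
      have hq1 := hside q hqD (Finset.ne_of_mem_erase hq)
      have hr1 := hside r hrD (Finset.ne_of_mem_erase hr)
      have e1 : h q.1 = h r.1 := congrArg Prod.fst heq
      have e2 : h q.2 = h r.2 := congrArg Prod.snd heq
      exact Prod.ext (hinj _ _ hq1.1 hr1.1 e1) (hinj _ _ hq1.2 hr1.2 e2)
    have hD'cond : ∀ p' ∈ D', p'.1 + 2 ≤ p'.2 ∧ p'.2 ≤ N - g := by
      intro p' hp'
      obtain ⟨q, hq, hqe⟩ := Finset.mem_image.mp hp'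
      have hqD := Finset.mem_of_mem_erase hq
      have hqp := Finset.ne_of_mem_erase hq
      have hs := hside q hqD hqp
      have hq2 := hD q hqD
      have hnep : ¬(q.1 = x ∧ q.2 = y) := by
        intro ⟨h1, h2⟩; exact hqp (Prod.ext h1 h2)
      subst hqe
      simp only [hhdef]
      constructor
      · split_ifs <;> omega
      · split_ifs <;> omega
    have hD'cross : ∀ p' ∈ D', ∀ q' ∈ D', ¬(p'.1 < q'.1 ∧ q'.1 < p'.2 ∧ p'.2 < q'.2) := by
      intro p' hp' q' hq' ⟨c1, c2, c3⟩
      obtain ⟨q, hq, hqe⟩ := Finset.mem_image.mp hp'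
      obtain ⟨r, hr, hre⟩ := Finset.mem_image.mp hq'
      have hqD := Finset.mem_of_mem_erase hq
      have hrD := Finset.mem_of_mem_erase hr
      have hsq := hside q hqD (Finset.ne_of_mem_erase hq)
      have hsr := hside r hrD (Finset.ne_of_mem_erase hr)
      subst hqe; subst hre
      exact hcross q hqD r hrD
        ⟨(hmono _ _ hsq.1 hsr.1).mp c1, (hmono _ _ hsr.1 hsq.2).mp c2,
         (hmono _ _ hsq.2 hsr.2).mp c3⟩
    have hlt : N - g < N := by omega
    have := ih (N - g) hlt D' hD'cond hD'cross
    have hcarderase : (D.erase p).card = D.card - 1 := Finset.card_erase_of_mem hp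
    have hDpos : 1 ≤ D.card := Finset.card_pos.mpr hne
    omega

lemma edge_bound {m : ℕ} (hm : 3 ≤ m) (K : SimpleGraph (Fin m))
    (hnc : ∀ a b c d : Fin m, a < b → b < c → c < d → K.Adj a c → ¬ K.Adj b d) :
    K.edgeSet.ncard ≤ 2 * m - 3 := by
  classical
  set P := pairOf '' K.edgeSet with hP
  have hcardP : P.ncard = K.edgeSet.ncard := Set.ncard_image_of_injective _ pairOf_inj
  have hPmem : ∀ q ∈ P, ∃ u v : Fin m, K.Adj u v ∧ u.val = q.1 ∧ v.val = q.2 ∧ u.val < v.val := by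
    intro q hq
    obtain ⟨e, he, rfl⟩ := hq
    exact pairOf_edge he
  have hPbase : ∀ q ∈ P, q.1 < q.2 ∧ q.2 ≤ m - 1 := by
    intro q hq
    obtain ⟨u, v, huv, h1, h2, h3⟩ := hPmem q hq
    have hv := v.isLt
    omega
  set S : Set (ℕ × ℕ) := {q | q.2 = q.1 + 1 ∨ (q.1 = 0 ∧ q.2 = m - 1)} with hS
  -- bound on P ∩ S
  have hb1 : (P ∩ S).ncard ≤ m := by
    have hsub : P ∩ S ⊆ ((fun i => (i, i + 1)) '' Set.Iio (m - 1)) ∪ {(0, m - 1)} := by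
      rintro q ⟨hqP, hqS⟩
      have hb := hPbase q hqP
      rcases hqS with h | ⟨h1, h2⟩
      · left
        refine ⟨q.1, by simp only [Set.mem_Iio]; omega, ?_⟩
        show (q.1, q.1 + 1) = q
        exact Prod.ext rfl h.symm
      · right
        simp only [Set.mem_singleton_iff]
        exact Prod.ext h1 h2
    calc (P ∩ S).ncard ≤ (((fun i => (i, i + 1)) '' Set.Iio (m - 1)) ∪ {(0, m - 1)}).ncard :=
          Set.ncard_le_ncard hsub (Set.Finite.union ((Set.finite_Iio _).image _) (Set.finite_singleton _))
      _ ≤ ((fun i => (i, i + 1)) '' Set.Iio (m - 1)).ncard + ({(0, m - 1)} : Set (ℕ × ℕ)).ncard :=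
          Set.ncard_union_le _ _
      _ ≤ (m - 1) + 1 := by
          gcongr
          · have : ((fun i : ℕ => (i, i + 1)) '' Set.Iio (m - 1)).ncard = (Set.Iio (m - 1)).ncard :=
              Set.ncard_image_of_injective _ (fun a b h => by
                simpa using congrArg Prod.fst h)
            rw [this, ← Finset.coe_range, Set.ncard_coe_finset]
            simp
          · simp [Set.ncard_singleton]
      _ ≤ m := by omega
  -- bound on P \ S
  have hb2 : (P \ S).ncard ≤ m - 3 := by
    have hfin : (insert ((0 : ℕ), m - 1) (P \ S)).Finite := Set.Finite.insert _ ((Set.toFinite P).diff)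
    set Dt := hfin.toFinset with hDt
    have hmemDt : ∀ q, q ∈ Dt ↔ q = (0, m - 1) ∨ q ∈ P \ S := by
      intro q; rw [hDt, Set.Finite.mem_toFinset, Set.mem_insert_iff]
    have hcond : ∀ q ∈ Dt, q.1 + 2 ≤ q.2 ∧ q.2 ≤ m - 1 := by
      intro q hq
      rcases (hmemDt q).mp hq with rfl | ⟨hqP, hqS⟩
      · simp; omega
      · have hb := hPbase q hqP
        simp only [hS, Set.mem_setOf_eq] at hqS
        push_neg at hqS
        refine ⟨?_, hb.2⟩
        have := hqS.1
        omega
    have hcross : ∀ p ∈ Dt, ∀ q ∈ Dt, ¬(p.1 < q.1 ∧ q.1 < p.2 ∧ p.2 < q.2) := by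
      intro p hp q hq ⟨c1, c2, c3⟩
      rcases (hmemDt p).mp hp with rfl | ⟨hpP, _⟩
      · have := (hcond q hq).2
        dsimp only at c1 c2 c3
        omega
      · rcases (hmemDt q).mp hq with rfl | ⟨hqP, _⟩
        · dsimp only at c1 c2 c3
          have := (hcond p hp).2
          omega
        · obtain ⟨u, v, huv, hu1, hv1, huv1⟩ := hPmem p hpP
          obtain ⟨w, z, hwz, hw1, hz1, hwz1⟩ := hPmem q hqP
          refine hnc u w v z ?_ ?_ ?_ huv hwz <;> rw [Fin.lt_def] <;> omega
    have hchord := chord_bound (m - 1) Dt hcond hcross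
    have hnotmem : ((0 : ℕ), m - 1) ∉ P \ S := by
      rintro ⟨_, hqS⟩
      exact hqS (Or.inr ⟨rfl, rfl⟩)
    have hcard1 : (insert ((0 : ℕ), m - 1) (P \ S)).ncard = (P \ S).ncard + 1 :=
      Set.ncard_insert_of_notMem hnotmem ((Set.toFinite P).diff)
    have hcard2 : (insert ((0 : ℕ), m - 1) (P \ S)).ncard = Dt.card :=
      Set.ncard_eq_toFinset_card _ hfin
    omega
  have hsplit : P.ncard ≤ (P ∩ S).ncard + (P \ S).ncard := by
    have : P = (P ∩ S) ∪ (P \ S) := (Set.inter_union_diff P S).symm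
    calc P.ncard = ((P ∩ S) ∪ (P \ S)).ncard := by rw [← this]
      _ ≤ _ := Set.ncard_union_le _ _
  omega

theorem mop_contraction_isMop {n : ℕ} [NeZero n] [NeZero (n - 1)]
    (G : SimpleGraph (Fin n)) (hn : 4 ≤ n) (hG : IsMop G)
    (f : Fin n → Fin (n - 1))
    (hf : ∀ x : Fin n, (f x).val = if x.val < n - 1 then x.val else n - 2)
    (H : SimpleGraph (Fin (n - 1)))
    (hH : ∀ a b : Fin (n - 1),
      H.Adj a b ↔ a ≠ b ∧ ∃ x y : Fin n, G.Adj x y ∧ f x = a ∧ f y = b) :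
    IsMop H := by
  classical
  obtain ⟨hGadj, hGnc, hGcount⟩ := hG
  have hm : 3 ≤ n - 1 := by omega
  have honeN : (1 : Fin n).val = 1 := by
    rw [Fin.val_one']; exact Nat.mod_eq_of_lt (by omega)
  have honeM : (1 : Fin (n - 1)).val = 1 := by
    rw [Fin.val_one']; exact Nat.mod_eq_of_lt (by omega)
  have hsuccN : ∀ j : Fin n, (j + 1).val = (j.val + 1) % n := by
    intro j; rw [Fin.add_def, honeN]
  have hsuccM : ∀ j : Fin (n - 1), (j + 1).val = (j.val + 1) % (n - 1) := by
    intro j; rw [Fin.add_def, honeM]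
  have hfval : ∀ z : Fin n, (f z).val = z.val ∨ ((f z).val = n - 2 ∧ z.val = n - 1) := by
    intro z
    have h := hf z
    have := z.isLt
    split at h
    · exact Or.inl h
    · exact Or.inr ⟨h, by omega⟩
  -- part (i)
  have hadjH : ∀ i : Fin (n - 1), H.Adj i (i + 1) := by
    intro i
    have hiv := i.isLt
    rcases lt_or_ge i.val (n - 2) with hi | hi
    · set x : Fin n := ⟨i.val, by omega⟩ with hxdef
      have hxval : x.val = i.val := rfl
      have hx1 : (x + 1).val = i.val + 1 := by
        rw [hsuccN, hxval]; exact Nat.mod_eq_of_lt (by omega)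
      have hia : (i + 1).val = i.val + 1 := by
        rw [hsuccM]; exact Nat.mod_eq_of_lt (by omega)
      rw [hH]
      refine ⟨?_, x, x + 1, hGadj x, ?_, ?_⟩
      · intro h
        have := congrArg Fin.val h
        rw [hia] at this
        omega
      · apply Fin.ext
        rcases hfval x with h | ⟨h1, h2⟩
        · rw [h, hxval]
        · rw [hxval] at h2; omega
      · apply Fin.ext
        rcases hfval (x + 1) with h | ⟨h1, h2⟩
        · rw [h, hx1, hia]
        · rw [hx1] at h2; omega
    · have hi' : i.val = n - 2 := by omega
      set x : Fin n := ⟨n - 1, by omega⟩ with hxdef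
      have hxval : x.val = n - 1 := rfl
      have hx1 : (x + 1).val = 0 := by
        have h : n - 1 + 1 = n := by omega
        rw [hsuccN, hxval, h, Nat.mod_self]
      have hia : (i + 1).val = 0 := by
        have h : n - 2 + 1 = n - 1 := by omega
        rw [hsuccM, hi', h, Nat.mod_self]
      rw [hH]
      refine ⟨?_, x, x + 1, hGadj x, ?_, ?_⟩
      · intro h
        have := congrArg Fin.val h
        rw [hia] at this
        omega
      · apply Fin.ext
        rcases hfval x with h | ⟨h1, h2⟩
        · have := (f x).isLt; rw [hxval] at h; omega
        · omega
      · apply Fin.ext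
        rcases hfval (x + 1) with h | ⟨h1, h2⟩
        · rw [h, hx1, hia]
        · rw [hx1] at h2; omega
  -- part (ii)
  have hncH : ∀ a b c d : Fin (n - 1), a < b → b < c → c < d → H.Adj a c → ¬ H.Adj b d := by
    intro a b c d hab hbc hcd hac hbd
    rw [hH] at hac hbd
    obtain ⟨-, x, y, hxy, hxa, hyc⟩ := hac
    obtain ⟨-, u, v, huv, hub, hvd⟩ := hbd
    rw [Fin.lt_def] at hab hbc hcd
    have hdv := d.isLt
    have h1 := hfval x; rw [hxa] at h1
    have h2 := hfval y; rw [hyc] at h2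
    have h3 := hfval u; rw [hub] at h3
    have h4 := hfval v; rw [hvd] at h4
    refine hGnc x u y v ?_ ?_ ?_ hxy huv <;> rw [Fin.lt_def] <;> omega
  refine ⟨hadjH, hncH, ?_⟩
  -- part (iii)
  have hupper : H.edgeSet.ncard ≤ 2 * (n - 1) - 3 := edge_bound hm H hncH
  -- lower bound via injection
  set vsec : Fin n := ⟨n - 2, by omega⟩ with hvsec
  set vlast : Fin n := ⟨n - 1, by omega⟩ with hvlast
  have hadjsl : G.Adj vsec vlast := by
    have := hGadj vsec
    have hv : vsec + 1 = vlast := by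
      apply Fin.ext
      have h1 : vsec.val = n - 2 := rfl
      have h2 : vlast.val = n - 1 := rfl
      have h3 : n - 2 + 1 = n - 1 := by omega
      rw [hsuccN, h1, h2, h3]
      exact Nat.mod_eq_of_lt (by omega)
    rwa [hv] at this
  set e₀ : Sym2 (Fin n) := s(vsec, vlast) with he₀
  set C : Set (Sym2 (Fin n)) := {e | ∃ x : Fin n, x.val < n - 2 ∧ e = s(x, vlast) ∧ G.Adj x vsec}
    with hC
  have huniq : ∀ e ∈ G.edgeSet ∩ C, ∀ e' ∈ G.edgeSet ∩ C, e = e' := by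
    rintro e ⟨heE, x, hx1, rfl, hx2⟩ e' ⟨heE', x', hx1', rfl, hx2'⟩
    rw [SimpleGraph.mem_edgeSet] at heE heE'
    rcases lt_trichotomy x x' with h | h | h
    · exact absurd heE' (hGnc x x' vsec vlast h (by rw [Fin.lt_def]; exact hx1')
        (by rw [Fin.lt_def]; simp only [hvsec, hvlast]; omega) hx2)
    · rw [h]
    · exact absurd heE (hGnc x' x vsec vlast h (by rw [Fin.lt_def]; exact hx1)
        (by rw [Fin.lt_def]; simp only [hvsec, hvlast]; omega) hx2')
  have hfeq : ∀ z w : Fin n, f z = f w →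
      z = w ∨ (z.val = n - 2 ∧ w.val = n - 1) ∨ (z.val = n - 1 ∧ w.val = n - 2) := by
    intro z w h
    have h1 := hfval z
    have h2 := hfval w
    have h3 : (f z).val = (f w).val := by rw [h]
    rcases h1 with h1 | ⟨h1a, h1b⟩ <;> rcases h2 with h2 | ⟨h2a, h2b⟩
    · exact Or.inl (Fin.ext (by omega))
    · exact Or.inr (Or.inl ⟨by omega, h2b⟩)
    · exact Or.inr (Or.inr ⟨h1b, by omega⟩)
    · exact Or.inl (Fin.ext (by omega))
  -- key injectivity lemma
  have main : ∀ x y u v : Fin n, G.Adj x y → G.Adj u v → f x = f u → f y = f v →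
      s(x, y) ≠ e₀ → s(u, v) ≠ e₀ → s(x, y) ∉ C → s(u, v) ∉ C → s(x, y) = s(u, v) := by
    intro x y u v hxy huv hfxu hfyv hne1 hne2 hnC1 hnC2
    have hx := x.isLt; have hy := y.isLt; have hu := u.isLt; have hv := v.isLt
    have hxyne : x.val ≠ y.val := fun h => hxy.ne (Fin.ext h)
    have huvne : u.val ≠ v.val := fun h => huv.ne (Fin.ext h)
    rcases hfeq x u hfxu with h1 | ⟨h1a, h1b⟩ | ⟨h1a, h1b⟩ <;>
      rcases hfeq y v hfyv with h2 | ⟨h2a, h2b⟩ | ⟨h2a, h2b⟩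
    · rw [h1, h2]
    · -- x = u, y.val = n-2, v.val = n-1 : s(u,v) = s(x, vlast) ∈ C
      subst h1
      have hyv : y = vsec := Fin.ext (by simp only [hvsec]; omega)
      have hvv : v = vlast := Fin.ext (by simp only [hvlast]; omega)
      have hxval : x.val < n - 2 := by
        rcases Nat.lt_or_ge x.val (n - 2) with h | h
        · exact h
        · exfalso
          have : x.val = n - 1 := by omega
          have hxv : x = vlast := Fin.ext (by simp only [hvlast]; omega)
          exact hne1 (by rw [hxv, hyv, he₀, Sym2.eq_swap])
      exact absurd ⟨x, hxval, by rw [hvv], by rwa [hyv] at hxy⟩ hnC2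
    · -- x = u, y.val = n-1, v.val = n-2 : s(x,y) ∈ C
      subst h1
      have hyv : y = vlast := Fin.ext (by simp only [hvlast]; omega)
      have hvv : v = vsec := Fin.ext (by simp only [hvsec]; omega)
      have hxval : x.val < n - 2 := by
        rcases Nat.lt_or_ge x.val (n - 2) with h | h
        · exact h
        · exfalso
          have : x.val = n - 2 := by omega
          have hxv : x = vsec := Fin.ext (by simp only [hvsec]; omega)
          exact hne1 (by rw [hxv, hyv, he₀])
      exact absurd ⟨x, hxval, by rw [hyv], by rwa [hvv] at huv⟩ hnC1
    · -- x.val = n-2, u.val = n-1, y = v : s(u,v) = s(vlast, y) ∈ C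
      subst h2
      have hxv : x = vsec := Fin.ext (by simp only [hvsec]; omega)
      have huv' : u = vlast := Fin.ext (by simp only [hvlast]; omega)
      have hyval : y.val < n - 2 := by omega
      refine absurd ⟨y, hyval, ?_, by rw [← hxv]; exact hxy.symm⟩ hnC2
      rw [huv', Sym2.eq_swap]
    · omega
    · -- x.val=n-2,u.val=n-1, y.val=n-1, v.val=n-2 : s(x,y) = e₀
      exfalso
      apply hne1
      have hxv : x = vsec := Fin.ext (by simp only [hvsec]; omega)
      have hyv : y = vlast := Fin.ext (by simp only [hvlast]; omega)
      rw [hxv, hyv, he₀]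
    · -- x.val = n-1, u.val = n-2, y = v : s(x,y) = s(vlast, y) ∈ C
      subst h2
      have hxv : x = vlast := Fin.ext (by simp only [hvlast]; omega)
      have huv' : u = vsec := Fin.ext (by simp only [hvsec]; omega)
      have hyval : y.val < n - 2 := by omega
      refine absurd ⟨y, hyval, ?_, by rw [← huv']; exact huv.symm⟩ hnC1
      rw [hxv, Sym2.eq_swap]
    · -- x.val=n-1, y.val=n-2 : s(x,y) = e₀
      exfalso
      apply hne1
      have hxv : x = vlast := Fin.ext (by simp only [hvlast]; omega)
      have hyv : y = vsec := Fin.ext (by simp only [hvsec]; omega)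
      rw [hxv, hyv, he₀, Sym2.eq_swap]
    · omega
  set Φ : Sym2 (Fin n) → Sym2 (Fin (n - 1)) ⊕ Bool := fun e =>
    if e = e₀ then .inr true else if e ∈ C then .inr false else .inl (e.map f) with hΦ
  set T : Set (Sym2 (Fin (n - 1)) ⊕ Bool) :=
    (Sum.inl '' H.edgeSet) ∪ {.inr true, .inr false} with hT
  have hmaps : ∀ e ∈ G.edgeSet, Φ e ∈ T := by
    intro e he
    induction e using Sym2.ind with
    | _ x y =>
    by_cases h1 : s(x, y) = e₀
    · simp only [hΦ, if_pos h1, hT]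
      right; left; rfl
    · by_cases h2 : s(x, y) ∈ C
      · simp only [hΦ, if_neg h1, if_pos h2, hT]
        right; right; rfl
      · simp only [hΦ, if_neg h1, if_neg h2, hT]
        left
        rw [SimpleGraph.mem_edgeSet] at he
        refine ⟨Sym2.map f s(x, y), ?_, rfl⟩
        rw [Sym2.map_pair_eq, SimpleGraph.mem_edgeSet, hH]
        refine ⟨?_, x, y, he, rfl, rfl⟩
        intro heq
        rcases hfeq x y heq with h | ⟨ha, hb⟩ | ⟨ha, hb⟩
        · exact he.ne h
        · exact h1 (by
            have hxv : x = vsec := Fin.ext (by simp only [hvsec]; omega)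
            have hyv : y = vlast := Fin.ext (by simp only [hvlast]; omega)
            rw [hxv, hyv, he₀])
        · exact h1 (by
            have hxv : x = vlast := Fin.ext (by simp only [hvlast]; omega)
            have hyv : y = vsec := Fin.ext (by simp only [hvsec]; omega)
            rw [hxv, hyv, he₀, Sym2.eq_swap])
  have hinjOn : Set.InjOn Φ G.edgeSet := by
    intro e he e' he' heq
    by_cases h1 : e = e₀ <;> by_cases h2 : e' = e₀
    · rw [h1, h2]
    · exfalso
      simp only [hΦ, if_pos h1, if_neg h2] at heq
      split at heq <;> simp at heq
    · exfalso
      simp only [hΦ, if_neg h1, if_pos h2] at heq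
      split at heq <;> simp at heq
    · by_cases h3 : e ∈ C <;> by_cases h4 : e' ∈ C
      · exact huniq e ⟨he, h3⟩ e' ⟨he', h4⟩
      · exfalso
        simp only [hΦ, if_neg h1, if_pos h3, if_neg h2, if_neg h4] at heq
        cases heq
      · exfalso
        simp only [hΦ, if_neg h1, if_neg h3, if_neg h2, if_pos h4] at heq
        cases heq
      · simp only [hΦ, if_neg h1, if_neg h3, if_neg h2, if_neg h4, Sum.inl.injEq] at heq
        revert he he' heq h1 h2 h3 h4
        induction e using Sym2.ind with
        | _ x y =>
        induction e' using Sym2.ind with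
        | _ u v =>
        intro he he' h1 h2 h3 h4 heq
        rw [SimpleGraph.mem_edgeSet] at he he'
        rw [Sym2.map_pair_eq, Sym2.map_pair_eq, Sym2.eq_iff] at heq
        rcases heq with ⟨hq1, hq2⟩ | ⟨hq1, hq2⟩
        · exact main x y u v he he' hq1 hq2 h1 h2 h3 h4
        · rw [main x y v u he he'.symm hq1 hq2 h1 (by rwa [Sym2.eq_swap])
            h3 (by rwa [Sym2.eq_swap]), Sym2.eq_swap]
  have hTfin : T.Finite := Set.toFinite _
  have hle := Set.ncard_le_ncard_of_injOn Φ hmaps hinjOn hTfin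
  have hTcard : T.ncard = H.edgeSet.ncard + 2 := by
    rw [hT, Set.ncard_union_eq ?_ (Set.toFinite _) (Set.toFinite _)]
    · rw [Set.ncard_image_of_injective _ Sum.inl_injective,
        Set.ncard_pair (by simp : (Sum.inr true : Sym2 (Fin (n - 1)) ⊕ Bool) ≠ .inr false)]
    · rw [Set.disjoint_left]
      rintro a ⟨s, -, rfl⟩ hmem
      rcases hmem with h | h <;> simp at h
  rw [hGcount] at hle
  omega
end

section
/- If G is a maximal outerplanar graph of order n ≥ 3, then γ(G) ≤ ⌊n/3⌋. -/
open SimpleGraph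

section MopProof
set_option linter.unusedVariables false
set_option linter.unusedSectionVars false

section Mop
variable {n : ℕ} [NeZero n] (G : SimpleGraph (Fin n))

lemma val_succ' {a : Fin n} (h : a.val + 1 < n) : ((a+1 : Fin n)).val = a.val + 1 := by
  have h1 : ((1 : Fin n)).val = 1 % n := Fin.val_one' n
  have h2 : (1 : ℕ) % n = 1 := Nat.mod_eq_of_lt (by omega)
  have h3 := Fin.val_add a 1
  rw [h1, h2] at h3
  rw [h3, Nat.mod_eq_of_lt h]

/-- The set of edges of `G` with both endpoints in the interval `[a,b]`. -/
def ebox (a b : Fin n) : Set (Sym2 (Fin n)) :=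
  {e | e ∈ G.edgeSet ∧ ∀ x ∈ e, a.val ≤ x.val ∧ x.val ≤ b.val}

lemma mem_ebox {a b u v : Fin n} :
    s(u,v) ∈ ebox G a b ↔ G.Adj u v ∧ (a.val ≤ u.val ∧ u.val ≤ b.val) ∧
      (a.val ≤ v.val ∧ v.val ≤ b.val) := by
  constructor
  · rintro ⟨he, hb⟩
    exact ⟨he, hb u (by simp), hb v (by simp)⟩
  · rintro ⟨he, hu, hv⟩
    refine ⟨he, ?_⟩
    intro x hx
    rcases Sym2.mem_iff.mp hx with h | h <;> subst h <;> assumption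

lemma edge_repr {e : Sym2 (Fin n)} (he : e ∈ G.edgeSet) :
    ∃ u v : Fin n, e = s(u,v) ∧ G.Adj u v ∧ u.val < v.val := by
  induction e using Sym2.inductionOn with
  | hf u v =>
    rw [SimpleGraph.mem_edgeSet] at he
    rcases lt_trichotomy u.val v.val with h | h | h
    · exact ⟨u, v, rfl, he, h⟩
    · exact absurd (Fin.ext h) he.ne
    · exact ⟨v, u, Sym2.eq_swap, he.symm, h⟩

lemma ebox_mono {a b a' b' : Fin n} (ha : a'.val ≤ a.val) (hb : b.val ≤ b'.val) :
    ebox G a b ⊆ ebox G a' b' := by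
  rintro e ⟨he, hbd⟩
  refine ⟨he, fun x hx => ?_⟩
  have := hbd x hx
  omega

variable {G}
variable (houter : ∀ i : Fin n, G.Adj i (i + 1))
variable (hcross : ∀ a b c d : Fin n, a < b → b < c → c < d → G.Adj a c → ¬ G.Adj b d)

include houter in
lemma adj_consec {u v : Fin n} (h : u.val + 1 = v.val) : G.Adj u v := by
  have hv : v = u + 1 := Fin.ext (by rw [val_succ' (by omega)]; omega)
  rw [hv]; exact houter u

include hcross in
lemma crossV {a b c d : Fin n} (h1 : a.val < b.val) (h2 : b.val < c.val) (h3 : c.val < d.val)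
    (hac : G.Adj a c) : ¬ G.Adj b d :=
  hcross a b c d (Fin.lt_def.mpr h1) (Fin.lt_def.mpr h2) (Fin.lt_def.mpr h3) hac

include hcross in
lemma straddle_left {a m b u v : Fin n} (ham : G.Adj a m) (h1 : a.val < m.val)
    (hsnd : ∀ v : Fin n, G.Adj a v → m.val < v.val → v.val < b.val → False)
    (huv : G.Adj u v) (hu : a.val ≤ u.val) (hv : v.val ≤ b.val)
    (hum : u.val < m.val) (hmv : m.val < v.val) : u = a ∧ v = b := by
  have hua : u = a := by
    by_contra hne
    have : a.val < u.val := lt_of_le_of_ne hu (fun h => hne (Fin.ext h.symm))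
    exact crossV hcross this hum hmv ham huv
  subst hua
  have hvb : v = b := by
    by_contra hne
    have : v.val < b.val := lt_of_le_of_ne hv (fun h => hne (Fin.ext h))
    exact hsnd v huv hmv this
  exact ⟨rfl, hvb⟩

include hcross in
lemma straddle_right {a m b u v : Fin n} (hmb : G.Adj m b) (h2 : m.val < b.val)
    (hfst : ∀ u : Fin n, G.Adj u b → a.val < u.val → u.val < m.val → False)
    (huv : G.Adj u v) (hu : a.val ≤ u.val) (hv : v.val ≤ b.val)
    (hum : u.val < m.val) (hmv : m.val < v.val) : u = a ∧ v = b := by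
  have hvb : v = b := by
    by_contra hne
    have : v.val < b.val := lt_of_le_of_ne hv (fun h => hne (Fin.ext h))
    exact crossV hcross hum hmv this huv hmb
  subst hvb
  have hua : u = a := by
    by_contra hne
    have : a.val < u.val := lt_of_le_of_ne hu (fun h => hne (Fin.ext h.symm))
    exact hfst u huv this hum
  exact ⟨hua, rfl⟩

include hcross in
lemma ebox_subset_three {a m b : Fin n} (ham : G.Adj a m) (h1 : a.val < m.val)
    (h2 : m.val < b.val)
    (hsnd : ∀ v : Fin n, G.Adj a v → m.val < v.val → v.val < b.val → False) :
    ebox G a b ⊆ ebox G a m ∪ ebox G m b ∪ {s(a,b)} := by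
  intro e he
  obtain ⟨u, v, rfl, huv, hlt⟩ := edge_repr G he.1
  rw [mem_ebox] at he
  obtain ⟨-, ⟨hau, hub⟩, ⟨hav, hvb⟩⟩ := he
  by_cases hvm : v.val ≤ m.val
  · exact Or.inl (Or.inl ((mem_ebox _).mpr ⟨huv, ⟨hau, by omega⟩, ⟨hav, hvm⟩⟩))
  by_cases hmu : m.val ≤ u.val
  · exact Or.inl (Or.inr ((mem_ebox _).mpr ⟨huv, ⟨hmu, hub⟩, ⟨by omega, hvb⟩⟩))
  obtain ⟨rfl, rfl⟩ := straddle_left hcross ham h1 hsnd huv hau hvb (by omega) (by omega)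
  exact Or.inr rfl

include hcross in
lemma ebox_subset_four {a M N b : Fin n} (haM : G.Adj a M) (hNb : G.Adj N b)
    (h1 : a.val < M.val) (h2 : M.val < N.val) (h3 : N.val < b.val)
    (hsnd : ∀ v : Fin n, G.Adj a v → M.val < v.val → v.val < b.val → False)
    (hfst : ∀ u : Fin n, G.Adj u b → a.val < u.val → u.val < N.val → False) :
    ebox G a b ⊆ ebox G a M ∪ ebox G M N ∪ ebox G N b ∪ {s(a,b)} := by
  intro e he
  obtain ⟨u, v, rfl, huv, hlt⟩ := edge_repr G he.1
  rw [mem_ebox] at he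
  obtain ⟨-, ⟨hau, hub⟩, ⟨hav, hvb⟩⟩ := he
  by_cases hvM : v.val ≤ M.val
  · exact Or.inl (Or.inl (Or.inl ((mem_ebox _).mpr ⟨huv, ⟨hau, by omega⟩, ⟨hav, hvM⟩⟩)))
  by_cases hNu : N.val ≤ u.val
  · exact Or.inl (Or.inr ((mem_ebox _).mpr ⟨huv, ⟨hNu, hub⟩, ⟨by omega, hvb⟩⟩))
  by_cases hmid : M.val ≤ u.val ∧ v.val ≤ N.val
  · exact Or.inl (Or.inl (Or.inr ((mem_ebox _).mpr ⟨huv, ⟨hmid.1, by omega⟩, ⟨by omega, hmid.2⟩⟩)))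
  by_cases huM : u.val < M.val
  · obtain ⟨rfl, rfl⟩ := straddle_left hcross haM h1 hsnd huv hau hvb huM (by omega)
    exact Or.inr rfl
  · obtain ⟨rfl, rfl⟩ := straddle_right hcross hNb h3 hfst huv hau hvb (by omega) (by omega)
    exact Or.inr rfl

include houter in
lemma exists_left_attach {a b : Fin n} (h : a.val + 1 < b.val) :
    ∃ x : Fin n, a.val < x.val ∧ x.val < b.val ∧ G.Adj a x := by
  refine ⟨a + 1, ?_, ?_, houter a⟩ <;>
    rw [val_succ' (by omega)] <;> omega

include houter in
lemma exists_right_attach {a b : Fin n} (h : a.val + 1 < b.val) :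
    ∃ x : Fin n, a.val < x.val ∧ x.val < b.val ∧ G.Adj x b := by
  refine ⟨⟨b.val - 1, by omega⟩, by simp; omega, by show b.val - 1 < b.val; omega,
    adj_consec houter (by simp; omega)⟩

include houter hcross in
lemma ebox_singleton_sub {a b : Fin n} (h : b.val = a.val + 1) :
    ebox G a b ⊆ {s(a,b)} := by
  intro e he
  obtain ⟨u, v, rfl, huv, hlt⟩ := edge_repr G he.1
  rw [mem_ebox] at he
  obtain ⟨-, ⟨hau, hub⟩, ⟨hav, hvb⟩⟩ := he
  have : u = a := Fin.ext (by omega)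
  have : v = b := Fin.ext (by omega)
  subst_vars; rfl

include houter hcross in
lemma ebox_bound : ∀ d : ℕ, ∀ a b : Fin n, a.val < b.val → b.val - a.val ≤ d →
    (ebox G a b).ncard ≤ 2 * (b.val - a.val) - 1 := by
  classical
  intro d
  induction d with
  | zero => intro a b h1 h2; omega
  | succ d ih =>
    intro a b h1 h2
    by_cases hone : b.val - a.val = 1
    · calc (ebox G a b).ncard ≤ ({s(a,b)} : Set (Sym2 (Fin n))).ncard :=
            Set.ncard_le_ncard (ebox_singleton_sub houter hcross (by omega)) (Set.toFinite _)
        _ = 1 := Set.ncard_singleton _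
        _ ≤ 2 * (b.val - a.val) - 1 := by omega
    · -- b.val - a.val ≥ 2
      have h2' : a.val + 1 < b.val := by omega
      -- M : max vertex in (a,b) adjacent to a
      obtain ⟨x₀, hx₀⟩ := exists_left_attach houter h2'
      set A : Finset (Fin n) :=
        Finset.univ.filter (fun x => a.val < x.val ∧ x.val < b.val ∧ G.Adj a x) with hA
      have hAne : A.Nonempty :=
        ⟨x₀, by rw [Finset.mem_filter]; exact ⟨Finset.mem_univ _, hx₀⟩⟩
      set M := A.max' hAne with hM
      have hMmem : a.val < M.val ∧ M.val < b.val ∧ G.Adj a M := by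
        exact (Finset.mem_filter.mp (A.max'_mem hAne)).2
      have hMmax : ∀ x : Fin n, a.val < x.val → x.val < b.val → G.Adj a x → x.val ≤ M.val := by
        intro x hx1 hx2 hx3
        exact Fin.le_def.mp (A.le_max' x
          (by rw [Finset.mem_filter]; exact ⟨Finset.mem_univ _, hx1, hx2, hx3⟩))
      have hsM : ∀ v : Fin n, G.Adj a v → M.val < v.val → v.val < b.val → False := by
        intro v hv h1' h2'
        have := hMmax v (by omega) h2' hv
        omega
      by_cases hMb : G.Adj M b
      · -- split in three
        have hsub := ebox_subset_three hcross hMmem.2.2 hMmem.1 hMmem.2.1 hsM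
        have b1 := ih a M hMmem.1 (by omega)
        have b2 := ih M b hMmem.2.1 (by omega)
        calc (ebox G a b).ncard
            ≤ (ebox G a M ∪ ebox G M b ∪ {s(a,b)}).ncard :=
              Set.ncard_le_ncard hsub (Set.toFinite _)
          _ ≤ (ebox G a M ∪ ebox G M b).ncard + ({s(a,b)} : Set (Sym2 (Fin n))).ncard :=
              Set.ncard_union_le _ _
          _ ≤ (ebox G a M).ncard + (ebox G M b).ncard + 1 := by
              have := Set.ncard_union_le (ebox G a M) (ebox G M b)
              have h1s := Set.ncard_singleton (s(a,b))
              omega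
          _ ≤ 2 * (b.val - a.val) - 1 := by omega
      · -- N : min vertex in (a,b) adjacent to b
        obtain ⟨y₀, hy₀⟩ := exists_right_attach houter h2'
        set B : Finset (Fin n) :=
          Finset.univ.filter (fun x => a.val < x.val ∧ x.val < b.val ∧ G.Adj x b) with hB
        have hBne : B.Nonempty :=
          ⟨y₀, by rw [Finset.mem_filter]; exact ⟨Finset.mem_univ _, hy₀⟩⟩
        set N := B.min' hBne with hN
        have hNmem : a.val < N.val ∧ N.val < b.val ∧ G.Adj N b := by
          exact (Finset.mem_filter.mp (B.min'_mem hBne)).2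
        have hNmin : ∀ x : Fin n, a.val < x.val → x.val < b.val → G.Adj x b → N.val ≤ x.val := by
          intro x hx1 hx2 hx3
          exact Fin.le_def.mp (B.min'_le x
            (by rw [Finset.mem_filter]; exact ⟨Finset.mem_univ _, hx1, hx2, hx3⟩))
        have hfN : ∀ u : Fin n, G.Adj u b → a.val < u.val → u.val < N.val → False := by
          intro u hu h1' h2'
          have := hNmin u h1' (by omega) hu
          omega
        have hMN : M.val < N.val := by
          rcases lt_trichotomy M.val N.val with h | h | h
          · exact h
          · exact absurd (Fin.ext h ▸ hNmem.2.2) hMb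
          · exact absurd hNmem.2.2 (crossV hcross hNmem.1 h hMmem.2.1 hMmem.2.2)
        have hsub := ebox_subset_four hcross hMmem.2.2 hNmem.2.2 hMmem.1 hMN hNmem.2.1 hsM hfN
        have b1 := ih a M hMmem.1 (by omega)
        have b2 := ih M N hMN (by omega)
        have b3 := ih N b hNmem.2.1 (by omega)
        calc (ebox G a b).ncard
            ≤ (ebox G a M ∪ ebox G M N ∪ ebox G N b ∪ {s(a,b)}).ncard :=
              Set.ncard_le_ncard hsub (Set.toFinite _)
          _ ≤ (ebox G a M ∪ ebox G M N ∪ ebox G N b).ncard + 1 := by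
              have := Set.ncard_union_le (ebox G a M ∪ ebox G M N ∪ ebox G N b)
                ({s(a,b)} : Set (Sym2 (Fin n)))
              have h1s := Set.ncard_singleton (s(a,b))
              omega
          _ ≤ (ebox G a M ∪ ebox G M N).ncard + (ebox G N b).ncard + 1 := by
              have := Set.ncard_union_le (ebox G a M ∪ ebox G M N) (ebox G N b)
              omega
          _ ≤ (ebox G a M).ncard + (ebox G M N).ncard + (ebox G N b).ncard + 1 := by
              have := Set.ncard_union_le (ebox G a M) (ebox G M N)
              omega
          _ ≤ 2 * (b.val - a.val) - 1 := by omega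

include houter hcross in
lemma exists_apex {a b : Fin n} (h2 : a.val + 2 ≤ b.val) (hab : G.Adj a b)
    (hcard : (ebox G a b).ncard = 2 * (b.val - a.val) - 1) :
    ∃ m : Fin n, a.val < m.val ∧ m.val < b.val ∧ G.Adj a m ∧ G.Adj m b ∧
      (ebox G a m).ncard = 2 * (m.val - a.val) - 1 ∧
      (ebox G m b).ncard = 2 * (b.val - m.val) - 1 := by
  classical
  have h2' : a.val + 1 < b.val := by omega
  have hapex : ∃ m : Fin n, a.val < m.val ∧ m.val < b.val ∧ G.Adj a m ∧ G.Adj m b := by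
    by_contra hno
    push_neg at hno
    obtain ⟨x₀, hx₀⟩ := exists_left_attach houter h2'
    set A : Finset (Fin n) :=
      Finset.univ.filter (fun x => a.val < x.val ∧ x.val < b.val ∧ G.Adj a x) with hA
    have hAne : A.Nonempty :=
      ⟨x₀, by rw [Finset.mem_filter]; exact ⟨Finset.mem_univ _, hx₀⟩⟩
    set M := A.max' hAne with hM
    have hMmem : a.val < M.val ∧ M.val < b.val ∧ G.Adj a M := by
      exact (Finset.mem_filter.mp (A.max'_mem hAne)).2
    have hMmax : ∀ x : Fin n, a.val < x.val → x.val < b.val → G.Adj a x → x.val ≤ M.val := by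
      intro x hx1 hx2 hx3
      exact Fin.le_def.mp (A.le_max' x
        (by rw [Finset.mem_filter]; exact ⟨Finset.mem_univ _, hx1, hx2, hx3⟩))
    have hsM : ∀ v : Fin n, G.Adj a v → M.val < v.val → v.val < b.val → False := by
      intro v hv h1' h2'
      have := hMmax v (by omega) h2' hv
      omega
    obtain ⟨y₀, hy₀⟩ := exists_right_attach houter h2'
    set B : Finset (Fin n) :=
      Finset.univ.filter (fun x => a.val < x.val ∧ x.val < b.val ∧ G.Adj x b) with hB
    have hBne : B.Nonempty :=
      ⟨y₀, by rw [Finset.mem_filter]; exact ⟨Finset.mem_univ _, hy₀⟩⟩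
    set N := B.min' hBne with hN
    have hNmem : a.val < N.val ∧ N.val < b.val ∧ G.Adj N b := by
      exact (Finset.mem_filter.mp (B.min'_mem hBne)).2
    have hNmin : ∀ x : Fin n, a.val < x.val → x.val < b.val → G.Adj x b → N.val ≤ x.val := by
      intro x hx1 hx2 hx3
      exact Fin.le_def.mp (B.min'_le x
        (by rw [Finset.mem_filter]; exact ⟨Finset.mem_univ _, hx1, hx2, hx3⟩))
    have hfN : ∀ u : Fin n, G.Adj u b → a.val < u.val → u.val < N.val → False := by
      intro u hu h1' h2'
      have := hNmin u h1' (by omega) hu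
      omega
    have hMb : ¬ G.Adj M b := hno M hMmem.1 hMmem.2.1 hMmem.2.2
    have hMN : M.val < N.val := by
      rcases lt_trichotomy M.val N.val with h | h | h
      · exact h
      · exact absurd (Fin.ext h ▸ hNmem.2.2) hMb
      · exact absurd hNmem.2.2 (crossV hcross hNmem.1 h hMmem.2.1 hMmem.2.2)
    have hsub := ebox_subset_four hcross hMmem.2.2 hNmem.2.2 hMmem.1 hMN hNmem.2.1 hsM hfN
    have b1 := ebox_bound houter hcross (M.val - a.val) a M hMmem.1 (le_refl _)
    have b2 := ebox_bound houter hcross (N.val - M.val) M N hMN (le_refl _)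
    have b3 := ebox_bound houter hcross (b.val - N.val) N b hNmem.2.1 (le_refl _)
    have hbig : (ebox G a b).ncard ≤
        (ebox G a M).ncard + (ebox G M N).ncard + (ebox G N b).ncard + 1 := by
      calc (ebox G a b).ncard
          ≤ (ebox G a M ∪ ebox G M N ∪ ebox G N b ∪ {s(a,b)}).ncard :=
            Set.ncard_le_ncard hsub (Set.toFinite _)
        _ ≤ (ebox G a M ∪ ebox G M N ∪ ebox G N b).ncard + 1 := by
            have := Set.ncard_union_le (ebox G a M ∪ ebox G M N ∪ ebox G N b)
              ({s(a,b)} : Set (Sym2 (Fin n)))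
            have h1s := Set.ncard_singleton (s(a,b))
            omega
        _ ≤ (ebox G a M ∪ ebox G M N).ncard + (ebox G N b).ncard + 1 := by
            have := Set.ncard_union_le (ebox G a M ∪ ebox G M N) (ebox G N b)
            omega
        _ ≤ (ebox G a M).ncard + (ebox G M N).ncard + (ebox G N b).ncard + 1 := by
            have := Set.ncard_union_le (ebox G a M) (ebox G M N)
            omega
    omega
  obtain ⟨m, hm1, hm2, ham, hmb⟩ := hapex
  have hsnd : ∀ v : Fin n, G.Adj a v → m.val < v.val → v.val < b.val → False :=
    fun v hv h1' h2' => (crossV hcross hm1 h1' h2' hv) hmb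
  have heq : ebox G a b = ebox G a m ∪ ebox G m b ∪ {s(a,b)} := by
    apply subset_antisymm (ebox_subset_three hcross ham hm1 hm2 hsnd)
    apply Set.union_subset
    · exact Set.union_subset (ebox_mono G (le_refl _) (le_of_lt hm2))
        (ebox_mono G (le_of_lt hm1) (le_refl _))
    · intro e he
      rw [Set.mem_singleton_iff] at he
      subst he
      exact (mem_ebox _).mpr ⟨hab, ⟨le_refl _, by omega⟩, ⟨by omega, le_refl _⟩⟩
  have hd1 : Disjoint (ebox G a m) (ebox G m b) := by
    rw [Set.disjoint_left]
    intro e he1 he2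
    obtain ⟨u, v, rfl, huv, hlt⟩ := edge_repr G he1.1
    rw [mem_ebox] at he1 he2
    omega
  have hd2 : Disjoint (ebox G a m ∪ ebox G m b) ({s(a,b)} : Set (Sym2 (Fin n))) := by
    rw [Set.disjoint_right]
    intro e he
    rw [Set.mem_singleton_iff] at he
    subst he
    rintro (h | h)
    · have := h.2 b (by simp)
      omega
    · have := h.2 a (by simp)
      omega
  have hcards : (ebox G a b).ncard = (ebox G a m).ncard + (ebox G m b).ncard + 1 := by
    rw [heq, Set.ncard_union_eq hd2 (Set.toFinite _) (Set.toFinite _),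
      Set.ncard_union_eq hd1 (Set.toFinite _) (Set.toFinite _), Set.ncard_singleton]
  have b1 := ebox_bound houter hcross (m.val - a.val) a m hm1 (le_refl _)
  have b2 := ebox_bound houter hcross (b.val - m.val) m b hm2 (le_refl _)
  exact ⟨m, hm1, hm2, ham, hmb, by omega, by omega⟩

lemma third_color (ca cb : Fin 3) (h : ca ≠ cb) : ∃ cm : Fin 3, cm ≠ ca ∧ cm ≠ cb := by
  fin_cases ca <;> fin_cases cb <;> first | (exact absurd rfl h) | decide

include houter hcross in
lemma color_lemma : ∀ d : ℕ, ∀ a b : Fin n, a.val < b.val → b.val - a.val ≤ d →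
    G.Adj a b → (ebox G a b).ncard = 2 * (b.val - a.val) - 1 →
    ∀ ca cb : Fin 3, ca ≠ cb →
    ∃ f : Fin n → Fin 3, f a = ca ∧ f b = cb ∧
      (∀ u v : Fin n, a.val ≤ u.val → u.val < v.val → v.val ≤ b.val → G.Adj u v → f u ≠ f v) ∧
      (2 ≤ b.val - a.val → ∀ x : Fin n, a.val ≤ x.val → x.val ≤ b.val →
        ∃ u w : Fin n, a.val ≤ u.val ∧ u.val < w.val ∧ w.val ≤ b.val ∧
          u ≠ x ∧ w ≠ x ∧ G.Adj x u ∧ G.Adj x w ∧ G.Adj u w) := by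
  classical
  intro d
  induction d with
  | zero => intro a b h1 h2; omega
  | succ d ih =>
    intro a b h1 h2 hab hcard ca cb hcacb
    by_cases hone : b.val - a.val = 1
    · have hba : b ≠ a := fun h => by rw [h] at h1; omega
      refine ⟨fun x => if x = a then ca else cb, by simp, by simp [hba],
        ?_, by intro h; omega⟩
      intro u v hu huv hv hadj
      have hua : u = a := Fin.ext (by omega)
      have hvb : v = b := Fin.ext (by omega)
      subst hua; subst hvb
      simp [hba, hcacb]
    · have h2' : a.val + 2 ≤ b.val := by omega
      obtain ⟨m, hm1, hm2, ham, hmb, hc1, hc2⟩ := exists_apex houter hcross h2' hab hcard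
      obtain ⟨cm, hcm1, hcm2⟩ := third_color ca cb hcacb
      obtain ⟨f₁, hf₁a, hf₁m, hp₁, ht₁⟩ :=
        ih a m hm1 (by omega) ham hc1 ca cm (Ne.symm hcm1)
      obtain ⟨f₂, hf₂m, hf₂b, hp₂, ht₂⟩ :=
        ih m b hm2 (by omega) hmb hc2 cm cb hcm2
      refine ⟨fun x => if x.val ≤ m.val then f₁ x else f₂ x, ?_, ?_, ?_, ?_⟩
      · simp only [if_pos (le_of_lt hm1)]; exact hf₁a
      · simp only [if_neg (by omega : ¬ b.val ≤ m.val)]; exact hf₂b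
      · intro u v hu huv hv hadj
        by_cases hvm : v.val ≤ m.val
        · simp only [if_pos (by omega : u.val ≤ m.val), if_pos hvm]
          exact hp₁ u v hu huv hvm hadj
        by_cases hum : m.val ≤ u.val
        · have hfu : (if u.val ≤ m.val then f₁ u else f₂ u) = f₂ u := by
            by_cases h : u.val ≤ m.val
            · have : u = m := Fin.ext (by omega)
              subst this
              simp only [if_pos h]
              rw [hf₁m, hf₂m]
            · simp only [if_neg h]
          simp only [hfu, if_neg (by omega : ¬ v.val ≤ m.val)]
          exact hp₂ u v hum huv hv hadj
        · -- straddle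
          have hsnd : ∀ w : Fin n, G.Adj a w → m.val < w.val → w.val < b.val → False :=
            fun w hw h1' h2' => (crossV hcross hm1 h1' h2' hw) hmb
          obtain ⟨hua, hvb⟩ := straddle_left hcross ham hm1 hsnd hadj hu hv
            (by omega) (by omega)
          simp only [hua, hvb]
          simp only [if_pos (le_of_lt hm1), if_neg (by omega : ¬ (b.val ≤ m.val))]
          rw [hf₁a, hf₂b]; exact hcacb
      · intro _ x hx1 hx2
        by_cases hxa : x = a
        · subst hxa
          exact ⟨m, b, by omega, by omega, le_refl _, fun h => by
            have := congrArg Fin.val h; omega, fun h => by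
            have := congrArg Fin.val h; omega, ham, hab, hmb⟩
        by_cases hxm : x = m
        · subst hxm
          exact ⟨a, b, le_refl _, by omega, le_refl _, fun h => by
            have := congrArg Fin.val h; omega, fun h => by
            have := congrArg Fin.val h; omega, ham.symm, hmb, hab⟩
        by_cases hxb : x = b
        · subst hxb
          exact ⟨a, m, le_refl _, by omega, by omega, fun h => by
            have := congrArg Fin.val h; omega, fun h => by
            have := congrArg Fin.val h; omega, hab.symm, hmb.symm, ham⟩
        · have hxa' : a.val < x.val :=
            lt_of_le_of_ne hx1 (fun h => hxa (Fin.ext h.symm))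
          have hxb' : x.val < b.val :=
            lt_of_le_of_ne hx2 (fun h => hxb (Fin.ext h))
          have hxm' : x.val ≠ m.val := fun h => hxm (Fin.ext h)
          by_cases hside : x.val < m.val
          · obtain ⟨u, w, k1, k2, k3, k4, k5, k6, k7, k8⟩ :=
              ht₁ (by omega) x hx1 (by omega)
            exact ⟨u, w, k1, k2, by omega, k4, k5, k6, k7, k8⟩
          · obtain ⟨u, w, k1, k2, k3, k4, k5, k6, k7, k8⟩ :=
              ht₂ (by omega) x (by omega) hx2
            exact ⟨u, w, by omega, k2, k3, k4, k5, k6, k7, k8⟩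

end Mop
end MopProof

theorem mop_domNum_le_third {n : ℕ} [NeZero n] (G : SimpleGraph (Fin n))
    (hn : 3 ≤ n) (hG : IsMop G) :
    domNum G ≤ n / 3 := by
  classical
  obtain ⟨houter, hcross, hcount⟩ := hG
  set a : Fin n := ⟨0, by omega⟩ with ha
  set b : Fin n := ⟨n - 1, by omega⟩ with hb
  have ha0 : a.val = 0 := rfl
  have hbv : b.val = n - 1 := rfl
  have hab : G.Adj a b := by
    have h := houter b
    have h1 : ((1 : Fin n)).val = 1 % n := Fin.val_one' n
    have h2 : (1 : ℕ) % n = 1 := Nat.mod_eq_of_lt (by omega)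
    have h3 := Fin.val_add b 1
    rw [h1, h2, hbv] at h3
    have h4 : (b + 1 : Fin n).val = 0 := by
      rw [h3]
      have : n - 1 + 1 = n := by omega
      rw [this, Nat.mod_self]
    have h5 : b + 1 = a := Fin.ext (by rw [h4, ha0])
    rw [h5] at h
    exact h.symm
  have hboxeq : ebox G a b = G.edgeSet := by
    ext e
    constructor
    · exact fun h => h.1
    · intro he
      refine ⟨he, fun x _ => ?_⟩
      have := x.isLt
      omega
  have hcard : (ebox G a b).ncard = 2 * (b.val - a.val) - 1 := by
    rw [hboxeq, hcount]; omega
  obtain ⟨f, hfa, hfb, hprop, htri⟩ :=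
    color_lemma houter hcross (n - 1) a b (by omega) (by omega) hab hcard 0 1 (by decide)
  have htri' := htri (by omega)
  have hsum : ∑ c : Fin 3, (Finset.univ.filter (fun x : Fin n => f x = c)).card = n := by
    rw [← Finset.card_eq_sum_card_fiberwise (fun x _ => Finset.mem_univ (f x))]
    exact Finset.card_fin n
  obtain ⟨c, hc⟩ :
      ∃ c : Fin 3, (Finset.univ.filter (fun x : Fin n => f x = c)).card ≤ n / 3 := by
    by_contra h
    push_neg at h
    have h0 := h 0; have h1 := h 1; have h2 := h 2
    rw [Fin.sum_univ_three] at hsum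
    omega
  set D : Set (Fin n) := {x | f x = c} with hD
  have hDcard : D.ncard = (Finset.univ.filter (fun x : Fin n => f x = c)).card := by
    rw [show D = ((Finset.univ.filter (fun x : Fin n => f x = c) : Finset (Fin n)) :
      Set (Fin n)) by ext x; simp [hD]]
    exact Set.ncard_coe_finset _
  have hdom : IsDomSet G D := by
    intro v hv
    have hfv : f v ≠ c := hv
    obtain ⟨u, w, k1, k2, k3, k4, k5, k6, k7, k8⟩ :=
      htri' v (by omega) (by have := v.isLt; omega)
    have big : ∀ p q : Fin n, p.val < q.val → G.Adj p q → f p ≠ f q := by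
      intro p q h hadj
      exact hprop p q (by omega) h (by have := q.isLt; omega) hadj
    have d_uw : f u ≠ f w := big u w k2 k8
    have d_vu : f v ≠ f u := by
      have hne : u.val ≠ v.val := fun h => k4 (Fin.ext h)
      rcases lt_or_gt_of_ne hne with h | h
      · exact (big u v h k6.symm).symm
      · exact big v u h k6
    have d_vw : f v ≠ f w := by
      have hne : w.val ≠ v.val := fun h => k5 (Fin.ext h)
      rcases lt_or_gt_of_ne hne with h | h
      · exact (big w v h k7.symm).symm
      · exact big v w h k7
    have hcuw : c = f u ∨ c = f w := by
      by_cases hcu : c = f u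
      · exact Or.inl hcu
      · refine Or.inr (Fin.ext ?_)
        have q0 : (f v).val ≠ (f u).val := fun h => d_vu (Fin.ext h)
        have q1 : (f v).val ≠ (f w).val := fun h => d_vw (Fin.ext h)
        have q2 : (f u).val ≠ (f w).val := fun h => d_uw (Fin.ext h)
        have q3 : (f v).val ≠ c.val := fun h => hfv (Fin.ext h)
        have q4 : c.val ≠ (f u).val := fun h => hcu (Fin.ext h)
        have l1 := c.isLt
        have l2 := (f v).isLt
        have l3 := (f u).isLt
        have l4 := (f w).isLt
        omega
    rcases hcuw with h | h
    · exact ⟨u, h.symm, k6.symm⟩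
    · exact ⟨w, h.symm, k7.symm⟩
  have hle : domNum G ≤ D.ncard := Nat.sInf_le ⟨D, hdom, rfl⟩
  calc domNum G ≤ D.ncard := hle
    _ ≤ n / 3 := by rw [hDcard]; exact hc
end
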